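/- arXiv:2207.13160 — 8 statements merged into one kernel-verified Lean document; each statement's English description precedes it below -/
import Mathlib

section
/- Let P be a polynomial in two variables over ℂ such that the function z ↦ P(z, z̄) is not identically zero on the unit circle (i.e., there exists z₀ with |z₀| = 1 and P(z₀, conj z₀) ≠ 0). Then the set {z : ℂ | |z| = 1 and P(z, conj z) = 0} is finite. -/
open ComplexConjugate

/-- If `P(z, z̄)` is not identically zero on the unit circle, then it has only
finitely many zeroes on the unit circle. -/
theorem finite_zeros_on_circle_of_not_identically_zero
    (P : MvPolynomial (Fin 2) ℂ)
    (h : ∃ z₀ : ℂ, ‖z₀‖ = 1 ∧ MvPolynomial.eval ![z₀, conj z₀] P ≠ 0) :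
    Set.Finite {z : ℂ | ‖z‖ = 1 ∧ MvPolynomial.eval ![z, conj z] P = 0} := by
  obtain ⟨z₀, hz₀, hP₀⟩ := h
  set N := P.totalDegree with hN
  set g : Polynomial ℂ :=
    ∑ m ∈ P.support, Polynomial.C (MvPolynomial.coeff m P) * Polynomial.X ^ (N + m 0 - m 1)
    with hg
  have key : ∀ z : ℂ, ‖z‖ = 1 →
      Polynomial.eval z g = z ^ N * MvPolynomial.eval ![z, conj z] P := by
    intro z hz
    have hz0 : z ≠ 0 := by
      intro h0; rw [h0] at hz; simp at hz
    have hconj : conj z = z⁻¹ := by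
      refine eq_inv_of_mul_eq_one_right ?_
      rw [Complex.mul_conj]
      norm_cast
      rw [Complex.normSq_eq_norm_sq, hz]; norm_num
    rw [MvPolynomial.eval_eq', hg]
    simp only [Polynomial.eval_finset_sum, Polynomial.eval_mul, Polynomial.eval_C,
      Polynomial.eval_pow, Polynomial.eval_X, Finset.mul_sum]
    refine Finset.sum_congr rfl fun m hm => ?_
    have hm1 : m 1 ≤ N + m 0 := by
      refine le_trans ?_ (le_add_right (MvPolynomial.le_totalDegree hm))
      rw [Finsupp.sum_fintype]
      · exact Finset.single_le_sum (f := fun i => m i) (fun _ _ => Nat.zero_le _)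
          (Finset.mem_univ 1)
      · intro; rfl
    rw [hconj, Fin.prod_univ_two]
    simp only [Matrix.cons_val_zero, Matrix.cons_val_one, Matrix.head_cons]
    rw [pow_sub₀ _ hz0 hm1, inv_pow]
    field_simp
    ring
  have hgne : g ≠ 0 := by
    intro h0
    apply hP₀
    have := key z₀ hz₀
    rw [h0] at this
    simp only [Polynomial.eval_zero] at this
    have hz₀0 : z₀ ≠ 0 := by intro h0; rw [h0] at hz₀; simp at hz₀
    exact (mul_eq_zero.mp this.symm).resolve_left (pow_ne_zero _ hz₀0)
  refine (Polynomial.finite_setOf_isRoot hgne).subset ?_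
  rintro z ⟨hz, hPz⟩
  simp only [Set.mem_setOf_eq, Polynomial.IsRoot]
  rw [key z hz, hPz, mul_zero]
end

section
/- Let P and Q be polynomials in two variables over ℂ such that Q(z, conj z) ≠ 0 for every z with |z| = 1. Then there exist one-variable polynomials p₁, q₁, p₂, q₂ over ℂ with q₁(z) ≠ 0 and q₂(z) ≠ 0 for every z with |z| ≤ 1 (so all poles of the rational functions p₁/q₁ and p₂/q₂ lie strictly outside the closed unit disc), such that P(z, conj z)/Q(z, conj z) = p₁(z)/q₁(z) + conj(p₂(z)/q₂(z)) for all z with |z| = 1. (This is the 'poles outside' decomposition of the restriction of a rational function of z and z̄ to the unit circle.) -/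
open ComplexConjugate
section PolesOutsideAux
open Polynomial


lemma laurentize (P : MvPolynomial (Fin 2) ℂ) :
    ∃ (A : Polynomial ℂ) (n : ℕ), ∀ z : ℂ, ‖z‖ = 1 →
      MvPolynomial.eval ![z, conj z] P * z ^ n = A.eval z := by
  induction P using MvPolynomial.induction_on with
  | C a => exact ⟨Polynomial.C a, 0, fun z hz => by simp⟩
  | add p q hp hq =>
      obtain ⟨A, n, hA⟩ := hp
      obtain ⟨B, m, hB⟩ := hq
      refine ⟨A * Polynomial.X ^ m + B * Polynomial.X ^ n, n + m, fun z hz => ?_⟩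
      simp only [MvPolynomial.eval_add, Polynomial.eval_add, Polynomial.eval_mul,
        Polynomial.eval_pow, Polynomial.eval_X]
      rw [← hA z hz, ← hB z hz]; ring
  | mul_X p i hp =>
      obtain ⟨A, n, hA⟩ := hp
      fin_cases i
      · refine ⟨A * Polynomial.X, n, fun z hz => ?_⟩
        simp only [MvPolynomial.eval_mul, MvPolynomial.eval_X, Polynomial.eval_mul,
          Polynomial.eval_X, Matrix.cons_val_zero]
        show _ * ![z, conj z] 0 * _ = _
        simp only [Matrix.cons_val_zero]
        rw [← hA z hz]; ring
      · refine ⟨A, n + 1, fun z hz => ?_⟩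
        have h1 : z * conj z = 1 := by
          have := Complex.mul_conj z
          rw [this, Complex.normSq_eq_norm_sq, hz]; norm_num
        simp only [MvPolynomial.eval_mul, MvPolynomial.eval_X]
        show _ * ![z, conj z] 1 * _ = _
        simp only [Matrix.cons_val_one, Matrix.head_cons]
        rw [← hA z hz, pow_succ]
        calc MvPolynomial.eval ![z, conj z] p * conj z * (z ^ n * z)
            = MvPolynomial.eval ![z, conj z] p * z ^ n * (z * conj z) := by ring
          _ = MvPolynomial.eval ![z, conj z] p * z ^ n := by rw [h1, mul_one]

lemma conj_poly (r : Polynomial ℂ) (d : ℕ) (hd : r.degree < (d : ℕ)) :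
    ∃ r' : Polynomial ℂ, ∀ z : ℂ, ‖z‖ = 1 →
      r'.eval z = z ^ d * conj (r.eval z) := by
  rcases eq_or_ne r 0 with rfl | hr
  · exact ⟨0, fun z hz => by simp⟩
  refine ⟨r.support.sum fun k => Polynomial.C (conj (r.coeff k)) * Polynomial.X ^ (d - k),
    fun z hz => ?_⟩
  have hz0 : z ≠ 0 := by
    intro h; rw [h] at hz; simp at hz
  have hzc : conj z = z⁻¹ := by
    have h1 : z * conj z = 1 := by
      rw [Complex.mul_conj, Complex.normSq_eq_norm_sq, hz]; norm_num
    field_simp [hz0] at h1 ⊢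
    exact h1
  rw [Polynomial.eval_finset_sum, Polynomial.eval_eq_sum, Polynomial.sum_def, map_sum,
    Finset.mul_sum]
  refine Finset.sum_congr rfl fun k hk => ?_
  have hkd : k ≤ d := by
    have := Polynomial.le_degree_of_mem_supp k hk
    have : (k : WithBot ℕ) < d := lt_of_le_of_lt this hd
    exact_mod_cast this.le
  simp only [Polynomial.eval_mul, Polynomial.eval_C, Polynomial.eval_pow, Polynomial.eval_X,
    map_mul, map_pow]
  rw [hzc, pow_sub₀ z hz0 hkd]
  field_simp
  rw [mul_assoc, ← mul_pow, mul_one_div_cancel hz0, one_pow, mul_one]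

lemma coprime_single (a : ℂ) (N : Multiset ℂ) (h : ∀ b ∈ N, a ≠ b) :
    IsCoprime (Polynomial.X - Polynomial.C a)
      (N.map fun b => Polynomial.X - Polynomial.C b).prod := by
  induction N using Multiset.induction_on with
  | empty => simp [isCoprime_one_right]
  | cons b s ih =>
      rw [Multiset.map_cons, Multiset.prod_cons]
      exact IsCoprime.mul_right
        (Polynomial.isCoprime_X_sub_C_of_isUnit_sub
          (sub_ne_zero_of_ne (h b (Multiset.mem_cons_self b s))).isUnit)
        (ih fun c hc => h c (Multiset.mem_cons_of_mem hc))

lemma coprime_prods (M N : Multiset ℂ) (h : ∀ a ∈ M, ∀ b ∈ N, a ≠ b) :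
    IsCoprime (M.map fun a => Polynomial.X - Polynomial.C a).prod
      (N.map fun b => Polynomial.X - Polynomial.C b).prod := by
  induction M using Multiset.induction_on with
  | empty => simp [isCoprime_one_left]
  | cons a s ih =>
      rw [Multiset.map_cons, Multiset.prod_cons]
      exact IsCoprime.mul_left
        (coprime_single a N (h a (Multiset.mem_cons_self a s)))
        (ih fun c hc => h c (Multiset.mem_cons_of_mem hc))

lemma prod_inside (M : Multiset ℂ) (z : ℂ) (hz : ‖z‖ = 1) :
    ((M.map fun a => Polynomial.X - Polynomial.C a).prod).eval z
      = z ^ Multiset.card M *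
        conj (((M.map fun a =>
          1 - Polynomial.C (conj a) * Polynomial.X).prod).eval z) := by
  have h1 : z * conj z = 1 := by
    rw [Complex.mul_conj, Complex.normSq_eq_norm_sq, hz]; norm_num
  induction M using Multiset.induction_on with
  | empty => simp
  | cons a s ih =>
      simp only [Multiset.map_cons, Multiset.prod_cons, Polynomial.eval_mul,
        Multiset.card_cons, map_mul]
      rw [ih, pow_succ]
      have : (Polynomial.X - Polynomial.C a).eval z = z *
          conj ((1 - Polynomial.C (conj a) * Polynomial.X).eval z) := by
        simp only [Polynomial.eval_sub, Polynomial.eval_X, Polynomial.eval_C,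
          Polynomial.eval_one, Polynomial.eval_mul, map_sub, map_one, map_mul,
          Complex.conj_conj]
        rw [mul_sub, mul_one, mul_comm a, ← mul_assoc, h1, one_mul]
      rw [this]; ring

lemma tilde_ne_zero (M : Multiset ℂ) (hM : ∀ a ∈ M, ‖a‖ < 1)
    (z : ℂ) (hz : ‖z‖ ≤ 1) :
    ((M.map fun a => 1 - Polynomial.C (conj a) * Polynomial.X).prod).eval z ≠ 0 := by
  rw [Polynomial.eval_multiset_prod]
  apply Multiset.prod_ne_zero
  intro h0
  rw [Multiset.mem_map] at h0
  obtain ⟨p, hp, hp0⟩ := h0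
  rw [Multiset.mem_map] at hp
  obtain ⟨a, ha, rfl⟩ := hp
  simp only [Polynomial.eval_sub, Polynomial.eval_one, Polynomial.eval_mul,
    Polynomial.eval_C, Polynomial.eval_X] at hp0
  have : ‖conj a * z‖ < 1 := by
    rw [norm_mul, Complex.norm_conj]
    calc ‖a‖ * ‖z‖ ≤ ‖a‖ * 1 :=
      mul_le_mul_of_nonneg_left hz (norm_nonneg a)
    _ < 1 := by rw [mul_one]; exact hM a ha
  have h1 : conj a * z = 1 := (sub_eq_zero.mp hp0).symm
  rw [h1] at this; simp at this

lemma out_ne_zero (lc : ℂ) (hlc : lc ≠ 0) (M : Multiset ℂ)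
    (hM : ∀ b ∈ M, 1 < ‖b‖) (z : ℂ) (hz : ‖z‖ ≤ 1) :
    ((Polynomial.C lc * (M.map fun b => Polynomial.X - Polynomial.C b).prod)).eval z ≠ 0 := by
  rw [Polynomial.eval_mul, Polynomial.eval_C]
  apply mul_ne_zero hlc
  rw [Polynomial.eval_multiset_prod]
  apply Multiset.prod_ne_zero
  intro h0
  rw [Multiset.mem_map] at h0
  obtain ⟨p, hp, hp0⟩ := h0
  rw [Multiset.mem_map] at hp
  obtain ⟨b, hb, rfl⟩ := hp
  simp only [Polynomial.eval_sub, Polynomial.eval_X, Polynomial.eval_C] at hp0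
  have : z = b := sub_eq_zero.mp hp0
  subst this
  exact absurd (hM z hb) (not_lt.mpr hz)

end PolesOutsideAux

/-- The "poles outside" decomposition: the restriction to the unit circle of a rational
function of `z` and `z̄` with nonvanishing denominator on the circle can be written as
`r₁(z) + conj (r₂(z))`, where `r₁` and `r₂` are rational functions of one variable whose
denominators do not vanish on the closed unit disc. -/
theorem poles_outside_decomposition_on_circle
    (P Q : MvPolynomial (Fin 2) ℂ)
    (hQ : ∀ z : ℂ, ‖z‖ = 1 → MvPolynomial.eval ![z, conj z] Q ≠ 0) :
    ∃ p₁ q₁ p₂ q₂ : Polynomial ℂ,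
      (∀ z : ℂ, ‖z‖ ≤ 1 → q₁.eval z ≠ 0) ∧
      (∀ z : ℂ, ‖z‖ ≤ 1 → q₂.eval z ≠ 0) ∧
      ∀ z : ℂ, ‖z‖ = 1 →
        MvPolynomial.eval ![z, conj z] P / MvPolynomial.eval ![z, conj z] Q
          = p₁.eval z / q₁.eval z + conj (p₂.eval z / q₂.eval z) := by
  obtain ⟨AP, n, hAP⟩ := laurentize P
  obtain ⟨BQ, m, hBQ⟩ := laurentize Q
  set A : Polynomial ℂ := AP * Polynomial.X ^ m with hA_def
  set B : Polynomial ℂ := BQ * Polynomial.X ^ n with hB_def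
  -- B is nonzero
  have hBQ1 : BQ.eval 1 ≠ 0 := by
    have h1 := hBQ 1 (by simp)
    rw [← h1, one_pow, mul_one]
    exact hQ 1 (by simp)
  have hBne : B ≠ 0 := by
    intro h
    apply hBQ1
    have : B.eval 1 = 0 := by rw [h]; simp
    simpa [hB_def] using this
  -- evaluation of B on the circle
  have hBeval : ∀ z : ℂ, ‖z‖ = 1 →
      B.eval z = MvPolynomial.eval ![z, conj z] Q * z ^ m * z ^ n := by
    intro z hz
    simp only [hB_def, Polynomial.eval_mul, Polynomial.eval_pow, Polynomial.eval_X]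
    rw [← hBQ z hz]
  have hBevalne : ∀ z : ℂ, ‖z‖ = 1 → B.eval z ≠ 0 := by
    intro z hz
    have hz0 : z ≠ 0 := fun h => by rw [h] at hz; simp at hz
    rw [hBeval z hz]
    exact mul_ne_zero (mul_ne_zero (hQ z hz) (pow_ne_zero _ hz0)) (pow_ne_zero _ hz0)
  -- roots
  set M : Multiset ℂ := B.roots with hM_def
  have hroot : ∀ a ∈ M, ‖a‖ ≠ 1 := by
    intro a ha h1
    have : B.eval a = 0 := by
      have := Polynomial.isRoot_of_mem_roots ha
      exact this
    exact hBevalne a h1 this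
  set Min : Multiset ℂ := M.filter (fun a => ‖a‖ < 1) with hMin_def
  set Mout : Multiset ℂ := M.filter (fun a => ¬ ‖a‖ < 1) with hMout_def
  have hsplit : Min + Mout = M := Multiset.filter_add_not _ _
  have hMinlt : ∀ a ∈ Min, ‖a‖ < 1 := fun a ha =>
    (Multiset.mem_filter.mp ha).2
  have hMoutgt : ∀ b ∈ Mout, 1 < ‖b‖ := by
    intro b hb
    have h1 := (Multiset.mem_filter.mp hb).2
    have h2 := hroot b (Multiset.mem_filter.mp hb).1
    exact lt_of_le_of_ne (not_lt.mp h1) (Ne.symm h2)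
  set lc : ℂ := B.leadingCoeff with hlc_def
  have hlc : lc ≠ 0 := Polynomial.leadingCoeff_ne_zero.mpr hBne
  have hfact : B = Polynomial.C lc * (M.map fun a => Polynomial.X - Polynomial.C a).prod :=
    (IsAlgClosed.splits B).eq_prod_roots
  set Bin : Polynomial ℂ := (Min.map fun a => Polynomial.X - Polynomial.C a).prod with hBin_def
  set Bout : Polynomial ℂ :=
    Polynomial.C lc * (Mout.map fun a => Polynomial.X - Polynomial.C a).prod with hBout_def
  have hBfact : B = Bin * Bout := by
    rw [hfact, ← hsplit, Multiset.map_add, Multiset.prod_add]; ring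
  -- coprimality
  have hcop0 : IsCoprime Bin (Mout.map fun a => Polynomial.X - Polynomial.C a).prod := by
    apply coprime_prods
    intro a ha b hb h
    subst h
    exact absurd (hMoutgt a hb) (not_lt.mpr (hMinlt a ha).le)
  have hcopC : IsCoprime Bin (Polynomial.C lc) :=
    ⟨0, Polynomial.C lc⁻¹, by
      rw [zero_mul, zero_add, ← Polynomial.C_mul, inv_mul_cancel₀ hlc, Polynomial.C_1]⟩
  have hcop : IsCoprime Bin Bout := hcopC.mul_right hcop0
  obtain ⟨u, v, huv⟩ := hcop
  have hmonic : Bin.Monic :=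
    Polynomial.monic_multiset_prod_of_monic Min _ (fun a _ => Polynomial.monic_X_sub_C a)
  set qd : Polynomial ℂ := (A * v) /ₘ Bin with hqd_def
  set r : Polynomial ℂ := (A * v) %ₘ Bin with hr_def
  have hdiv : r + Bin * qd = A * v := Polynomial.modByMonic_add_div (A * v) Bin
  set d : ℕ := Multiset.card Min with hd_def
  have hdeg_bin : Bin.natDegree = d := by
    rw [hBin_def]
    exact Polynomial.natDegree_multiset_prod_X_sub_C_eq_card Min
  have hdr : r.degree < (d : ℕ) := by
    have h1 := Polynomial.degree_modByMonic_lt (A * v) hmonic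
    rwa [Polynomial.degree_eq_natDegree hmonic.ne_zero, hdeg_bin] at h1
  obtain ⟨r', hr'⟩ := conj_poly r d hdr
  set Btil : Polynomial ℂ :=
    (Min.map fun a => 1 - Polynomial.C (conj a) * Polynomial.X).prod with hBtil_def
  refine ⟨qd * Bout + A * u, Bout, r', Btil, ?_, ?_, ?_⟩
  · intro z hz
    exact out_ne_zero lc hlc Mout hMoutgt z hz
  · intro z hz
    exact tilde_ne_zero Min hMinlt z hz
  · intro z hz
    have hz0 : z ≠ 0 := fun h => by rw [h] at hz; simp at hz
    have hzz : z * conj z = 1 := by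
      rw [Complex.mul_conj, Complex.normSq_eq_norm_sq, hz]; norm_num
    have hQz := hQ z hz
    have hBz := hBevalne z hz
    have hBinz : Bin.eval z ≠ 0 := by
      intro h
      apply hBz
      rw [hBfact, Polynomial.eval_mul, h, zero_mul]
    have hBoutz : Bout.eval z ≠ 0 := out_ne_zero lc hlc Mout hMoutgt z hz.le
    have hBtilz : Btil.eval z ≠ 0 := tilde_ne_zero Min hMinlt z hz.le
    have key1 : Bin.eval z = z ^ d * conj (Btil.eval z) := prod_inside Min z hz
    have hzd : conj (z ^ d) * z ^ d = 1 := by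
      rw [map_pow, ← mul_pow, mul_comm, hzz, one_pow]
    have key2 : conj (r'.eval z / Btil.eval z) = r.eval z / Bin.eval z := by
      rw [map_div₀, hr' z hz, map_mul, Complex.conj_conj]
      rw [div_eq_div_iff (fun h => by simp [h] at hBtilz; exact hBtilz (by simpa using h)) hBinz]
      · rw [key1]
        ring_nf
        linear_combination (r.eval z * conj (Btil.eval z)) * hzd
    rw [key2]
    have hPQ : MvPolynomial.eval ![z, conj z] P / MvPolynomial.eval ![z, conj z] Q
        = A.eval z / B.eval z := by
      rw [div_eq_div_iff hQz hBz]
      simp only [hA_def, hB_def, Polynomial.eval_mul, Polynomial.eval_pow, Polynomial.eval_X]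
      linear_combination (BQ.eval z) * hAP z hz - (AP.eval z) * hBQ z hz
    have key3 : A = (qd * Bout + A * u) * Bin + r * Bout := by
      linear_combination (-A) * huv - Bout * hdiv
    have e3 := congrArg (Polynomial.eval z) key3
    have eB := congrArg (Polynomial.eval z) hBfact
    simp only [Polynomial.eval_add, Polynomial.eval_mul] at e3 eB
    rw [hPQ, div_add_div _ _ hBoutz hBinz,
      div_eq_div_iff hBz (mul_ne_zero hBoutz hBinz)]
    simp only [Polynomial.eval_add, Polynomial.eval_mul]
    linear_combination (Bout.eval z * Bin.eval z) * e3
      - ((qd.eval z * Bout.eval z + A.eval z * u.eval z) * Bin.eval z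
          + r.eval z * Bout.eval z) * eB
end

section
/- Let p₁, q₁, p₂, q₂ be one-variable polynomials over ℂ with q₁(z) ≠ 0 and q₂(z) ≠ 0 for every z with |z| ≤ 1, and suppose p₁(z)/q₁(z) + conj(p₂(z)/q₂(z)) = 0 for every z with |z| = 1. Then there exists a constant c ∈ ℂ such that p₁(z)/q₁(z) = c and p₂(z)/q₂(z) = -conj(c) for every z with |z| ≤ 1. Consequently, the 'poles outside' decomposition of a rational function of z and z̄ on the unit circle is unique up to an additive constant. -/
open ComplexConjugate Polynomial

lemma eval_map_conj (r : Polynomial ℂ) (z : ℂ) :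
    (r.map (starRingEnd ℂ)).eval z = conj (r.eval (conj z)) := by
  rw [Polynomial.eval_map]
  conv_lhs => rw [show z = starRingEnd ℂ (conj z) by simp]
  rw [Polynomial.eval₂_hom]

lemma eval_reflect' (N : ℕ) (f : Polynomial ℂ) (hf : f.natDegree ≤ N)
    {z : ℂ} (hz : z ≠ 0) :
    (Polynomial.reflect N f).eval z = z ^ N * f.eval z⁻¹ := by
  have hz' : z⁻¹ ≠ 0 := inv_ne_zero hz
  have : Invertible (z⁻¹) := invertibleOfNonzero hz'
  have h := Polynomial.eval₂_reflect_mul_pow (RingHom.id ℂ) (z⁻¹) N f hf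
  rw [invOf_eq_inv, inv_inv, Polynomial.eval₂_eq_eval_map, Polynomial.eval₂_eq_eval_map, Polynomial.map_id, Polynomial.map_id] at h
  rw [← h]
  field_simp
  rw [mul_assoc, one_div, ← mul_pow, mul_inv_cancel₀ hz, one_pow, mul_one]

lemma circle_infinite : Set.Infinite {z : ℂ | ‖z‖ = 1} := by
  have hinj : Function.Injective (fun a : ℝ => (1 + a*Complex.I)/(1 - a*Complex.I)) := by
    intro a b hab
    have ha : (1 : ℂ) - a*Complex.I ≠ 0 := by
      intro h
      have := congrArg Complex.re h
      simp at this
    have hb : (1 : ℂ) - b*Complex.I ≠ 0 := by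
      intro h
      have := congrArg Complex.re h
      simp at this
    rw [div_eq_div_iff ha hb] at hab
    have h2 : ((a : ℂ) - b) * (2*Complex.I) = 0 := by linear_combination hab
    rcases mul_eq_zero.1 h2 with h | h
    · exact_mod_cast sub_eq_zero.1 h
    · simp [Complex.I_ne_zero] at h
  apply Set.infinite_of_injective_forall_mem (f := fun a : ℝ => (1 + a*Complex.I)/(1 - a*Complex.I)) hinj
  intro a
  have hc : (1 : ℂ) - a*Complex.I = conj (1 + a*Complex.I) := by
    simp [map_add, map_mul, Complex.conj_I]
    ring
  have hne : (1 : ℂ) + a*Complex.I ≠ 0 := by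
    intro h
    have := congrArg Complex.re h
    simp at this
  show ‖_‖ = 1
  rw [norm_div, hc, Complex.norm_conj, div_self]
  simpa using hne

/-- Uniqueness (up to an additive constant) of the "poles outside" decomposition:
if `p₁/q₁ + conj (p₂/q₂)` vanishes on the unit circle, where `q₁` and `q₂` do not
vanish on the closed unit disc, then `p₁/q₁` is a constant `c` and `p₂/q₂` is the
constant `-conj c` on the closed unit disc. -/
theorem poles_outside_decomposition_unique
    (p₁ q₁ p₂ q₂ : Polynomial ℂ)
    (h₁ : ∀ z : ℂ, ‖z‖ ≤ 1 → q₁.eval z ≠ 0)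
    (h₂ : ∀ z : ℂ, ‖z‖ ≤ 1 → q₂.eval z ≠ 0)
    (hsum : ∀ z : ℂ, ‖z‖ = 1 →
      p₁.eval z / q₁.eval z + conj (p₂.eval z / q₂.eval z) = 0) :
    ∃ c : ℂ, ∀ z : ℂ, ‖z‖ ≤ 1 →
      p₁.eval z / q₁.eval z = c ∧ p₂.eval z / q₂.eval z = -conj c := by
  classical
  set p₂' := p₂.map (starRingEnd ℂ) with hp₂'def
  set q₂' := q₂.map (starRingEnd ℂ) with hq₂'def
  have hq₂'ne : ∀ w : ℂ, ‖w‖ ≤ 1 → q₂'.eval w ≠ 0 := by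
    intro w hw
    rw [hq₂'def, eval_map_conj]
    simp only [ne_eq, _root_.map_eq_zero]
    exact h₂ (conj w) (by rwa [Complex.norm_conj])
  have hq₁0 : q₁ ≠ 0 := fun h => h₁ 0 (by simp) (by simp [h])
  set m := max p₂'.natDegree q₂'.natDegree with hm
  -- circle facts packaged
  have hcirc : ∀ z : ℂ, ‖z‖ = 1 → z ≠ 0 ∧ conj z = z⁻¹ := by
    intro z hz
    have hz0 : z ≠ 0 := by intro h; rw [h] at hz; simp at hz
    exact ⟨hz0, (RCLike.inv_eq_conj hz).symm⟩
  have hA : p₁ * Polynomial.reflect m q₂' + Polynomial.reflect m p₂' * q₁ = 0 := by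
    apply Polynomial.eq_zero_of_infinite_isRoot
    apply Set.Infinite.mono _ circle_infinite
    intro z hz
    simp only [Set.mem_setOf_eq] at hz
    obtain ⟨hz0, hzc⟩ := hcirc z hz
    have e1 : (Polynomial.reflect m p₂').eval z = z ^ m * p₂'.eval z⁻¹ :=
      eval_reflect' m p₂' (le_max_left _ _) hz0
    have e2 : (Polynomial.reflect m q₂').eval z = z ^ m * q₂'.eval z⁻¹ :=
      eval_reflect' m q₂' (le_max_right _ _) hz0
    have hinvz : conj (z⁻¹) = z := by rw [map_inv₀, hzc, inv_inv]
    have ep : p₂'.eval z⁻¹ = conj (p₂.eval z) := by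
      rw [hp₂'def, eval_map_conj, hinvz]
    have eq' : q₂'.eval z⁻¹ = conj (q₂.eval z) := by
      rw [hq₂'def, eval_map_conj, hinvz]
    have hs := hsum z hz
    rw [map_div₀] at hs
    have hq₁z := h₁ z hz.le
    have hq₂z : conj (q₂.eval z) ≠ 0 := by
      simp only [ne_eq, _root_.map_eq_zero]; exact h₂ z hz.le
    have key : p₁.eval z * conj (q₂.eval z) + conj (p₂.eval z) * q₁.eval z = 0 := by
      field_simp at hs
      linear_combination hs
    show Polynomial.IsRoot _ z
    simp only [Polynomial.IsRoot, Polynomial.eval_add, Polynomial.eval_mul, e1, e2, ep, eq']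
    linear_combination z ^ m * key
  have hcop : IsCoprime q₁ (Polynomial.reflect m q₂') := by
    apply EuclideanDomain.isCoprime_of_dvd
    · rintro ⟨h, -⟩; exact hq₁0 h
    · intro d hdnu hd0 hdvd1 hdvd2
      have hdeg : d.degree ≠ 0 := fun h => hdnu (Polynomial.isUnit_iff_degree_eq_zero.2 h)
      obtain ⟨z, hzroot⟩ := Complex.exists_root (by
        rcases lt_or_eq_of_le (bot_le : ⊥ ≤ d.degree) with h | h
        · exact lt_of_le_of_ne (by
            rcases Polynomial.degree_eq_natDegree hd0 with h'
            rw [h']; exact_mod_cast Nat.zero_le _) (Ne.symm hdeg)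
        · exact absurd (Polynomial.degree_eq_bot.1 h.symm) hd0)
      have hq₁z : q₁.eval z = 0 := by
        obtain ⟨e, he⟩ := hdvd1
        rw [he, Polynomial.eval_mul, hzroot, zero_mul]
      have habs : 1 < ‖z‖ := lt_of_not_ge fun h => h₁ z h hq₁z
      have hz0 : z ≠ 0 := by
        intro h; rw [h, norm_zero] at habs; linarith
      have hQrz : (Polynomial.reflect m q₂').eval z = 0 := by
        obtain ⟨e, he⟩ := hdvd2
        rw [he, Polynomial.eval_mul, hzroot, zero_mul]
      rw [eval_reflect' m q₂' (le_max_right _ _) hz0] at hQrz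
      rcases mul_eq_zero.1 hQrz with h | h
      · exact pow_ne_zero m hz0 h
      · exact hq₂'ne z⁻¹ (by
          rw [norm_inv]
          exact inv_le_one_of_one_le₀ habs.le) h
  have hdvd : q₁ ∣ p₁ * Polynomial.reflect m q₂' :=
    ⟨-(Polynomial.reflect m p₂'), by linear_combination hA⟩
  obtain ⟨s, hs⟩ := hcop.dvd_of_dvd_mul_right hdvd
  set s' := s.map (starRingEnd ℂ) with hs'def
  set ds := s'.natDegree with hdsdef
  have hB : Polynomial.X ^ ds * p₂ + q₂ * Polynomial.reflect ds s' = 0 := by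
    apply Polynomial.eq_zero_of_infinite_isRoot
    apply Set.Infinite.mono _ circle_infinite
    intro z hz
    simp only [Set.mem_setOf_eq] at hz
    obtain ⟨hz0, hzc⟩ := hcirc z hz
    have hinvz : conj (z⁻¹) = z := by rw [map_inv₀, hzc, inv_inv]
    have e1 : (Polynomial.reflect ds s').eval z = z ^ ds * s'.eval z⁻¹ :=
      eval_reflect' ds s' le_rfl hz0
    have es : s'.eval z⁻¹ = conj (s.eval z) := by
      rw [hs'def, eval_map_conj, hinvz]
    have hsz := hsum z hz
    rw [map_div₀] at hsz
    have hq₁z := h₁ z hz.le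
    have hq₂z : conj (q₂.eval z) ≠ 0 := by
      simp only [ne_eq, _root_.map_eq_zero]; exact h₂ z hz.le
    have hp₁z : p₁.eval z = q₁.eval z * s.eval z := by
      rw [hs, Polynomial.eval_mul]
    rw [hp₁z] at hsz
    have key : conj (s.eval z) * q₂.eval z + p₂.eval z = 0 := by
      field_simp at hsz
      have : s.eval z * conj (q₂.eval z) + conj (p₂.eval z) = 0 := by
        linear_combination hsz
      have h4 := congrArg conj this
      simpa [map_add, map_mul] using h4
    show Polynomial.IsRoot _ z
    simp only [Polynomial.IsRoot, Polynomial.eval_add, Polynomial.eval_mul,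
      Polynomial.eval_pow, Polynomial.eval_X, e1, es]
    linear_combination z ^ ds * key
  have hds : ds = 0 := by
    by_contra hne
    have h0 := congrArg (Polynomial.eval 0) hB
    have hrefl0 : (Polynomial.reflect ds s').eval 0 = s'.coeff ds := by
      rw [← Polynomial.coeff_zero_eq_eval_zero, Polynomial.coeff_reflect,
        Polynomial.revAt_zero]
    simp only [Polynomial.eval_add, Polynomial.eval_mul, Polynomial.eval_pow,
      Polynomial.eval_X, Polynomial.eval_zero, zero_pow hne, zero_mul, zero_add,
      hrefl0] at h0
    have hq₂0 := h₂ 0 (by simp)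
    have hlc : s'.coeff ds = 0 := by
      rcases mul_eq_zero.1 h0 with h | h
      · exact absurd h hq₂0
      · exact h
    have hs'0 : s' = 0 := Polynomial.leadingCoeff_eq_zero.1 hlc
    rw [hdsdef, hs'0] at hne
    simp at hne
  have hsC : s = Polynomial.C (s.coeff 0) := by
    apply Polynomial.eq_C_of_natDegree_eq_zero
    have hnd := Polynomial.natDegree_map (starRingEnd ℂ) (p := s)
    rw [← hnd]
    exact hds
  set c := s.coeff 0 with hc
  have hs'C : s' = Polynomial.C (conj c) := by
    rw [hs'def, hsC]; simp
  have hp₂eq : p₂ = -(q₂ * Polynomial.C (conj c)) := by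
    have := hB
    rw [hds, pow_zero, one_mul, hs'C, Polynomial.reflect_C, pow_zero, mul_one] at this
    linear_combination this
  refine ⟨c, fun z hz => ⟨?_, ?_⟩⟩
  · rw [hs, hsC, Polynomial.eval_mul, Polynomial.eval_C]
    exact mul_div_cancel_left₀ c (h₁ z hz)
  · rw [hp₂eq]
    simp only [Polynomial.eval_neg, Polynomial.eval_mul, Polynomial.eval_C]
    rw [neg_div, mul_div_cancel_left₀ _ (h₂ z hz)]
end

section
/- Let P and Q be polynomials in two variables over ℂ such that Q(z, conj z) ≠ 0 for every z with |z| = 1. Then there exist one-variable polynomials p₁, q₁, p₂, q₂ over ℂ such that every root of q₁ and of q₂ lies in the open unit disc {z : |z| < 1}, the degree of pᵢ is at most the degree of qᵢ for i = 1, 2 (so the rational functions p₁/q₁ and p₂/q₂ have no pole at infinity and all their poles lie inside the open unit disc), and P(z, conj z)/Q(z, conj z) = p₁(z)/q₁(z) + conj(p₂(z)/q₂(z)) for all z with |z| = 1. (This is the 'poles inside' decomposition.) -/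
open ComplexConjugate

section Helpers
open Polynomial

lemma circle_ne_zero {z : ℂ} (hz : ‖z‖ = 1) : z ≠ 0 := by
  intro h; simp [h] at hz

lemma circle_conj_eq_inv {z : ℂ} (hz : ‖z‖ = 1) : conj z = z⁻¹ := by
  have h0 : z ≠ 0 := circle_ne_zero hz
  field_simp
  rw [mul_comm, Complex.mul_conj, Complex.normSq_eq_norm_sq, hz]
  norm_num

lemma exists_laurent (P : MvPolynomial (Fin 2) ℂ) :
    ∃ (A : Polynomial ℂ) (k : ℕ), ∀ z : ℂ, ‖z‖ = 1 →
      MvPolynomial.eval ![z, conj z] P = A.eval z / z ^ k := by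
  induction P using MvPolynomial.induction_on with
  | C a => exact ⟨C a, 0, fun z _ => by simp⟩
  | add p q hp hq =>
      obtain ⟨A, j, hA⟩ := hp
      obtain ⟨B, l, hB⟩ := hq
      refine ⟨A * X ^ l + B * X ^ j, j + l, fun z hz => ?_⟩
      have h0 : z ≠ 0 := circle_ne_zero hz
      rw [map_add, hA z hz, hB z hz,
        div_add_div _ _ (pow_ne_zero _ h0) (pow_ne_zero _ h0)]
      have hnum : (A * X ^ l + B * X ^ j).eval z
          = A.eval z * z ^ l + B.eval z * z ^ j := by simp
      rw [hnum, pow_add]; ring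
  | mul_X p i hp =>
      obtain ⟨A, k, hA⟩ := hp
      fin_cases i
      · refine ⟨A * X, k, fun z hz => ?_⟩
        rw [map_mul, hA z hz, MvPolynomial.eval_X]
        rw [eval_mul, eval_X]
        show eval z A / z ^ k * z = _
        ring
      · refine ⟨A, k + 1, fun z hz => ?_⟩
        rw [map_mul, hA z hz, MvPolynomial.eval_X]
        rw [circle_conj_eq_inv hz, pow_succ]
        show eval z A / z ^ k * z⁻¹ = _
        ring

noncomputable def reflC (M : ℕ) (f : Polynomial ℂ) : Polynomial ℂ :=
  ∑ k ∈ Finset.range (M + 1), C (conj (f.coeff k)) * X ^ (M - k)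

lemma reflC_degree_le (M : ℕ) (f : Polynomial ℂ) : (reflC M f).degree ≤ M := by
  refine (degree_sum_le _ _).trans ?_
  rw [Finset.sup_le_iff]
  intro k hk
  refine (degree_C_mul_X_pow_le _ _).trans ?_
  exact_mod_cast Nat.cast_le.mpr (Nat.sub_le _ _)

lemma reflC_coeff_M (M : ℕ) (f : Polynomial ℂ) : (reflC M f).coeff M = conj (f.coeff 0) := by
  rw [reflC, finset_sum_coeff]
  rw [Finset.sum_eq_single 0]
  · simp
  · intro k hk hk0
    rw [coeff_C_mul, coeff_X_pow, if_neg, mul_zero]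
    intro h
    have hkM : k ≤ M := Nat.lt_succ_iff.mp (Finset.mem_range.mp hk)
    omega
  · intro h; simp at h

lemma reflC_eval {M : ℕ} {f : Polynomial ℂ} (hf : f.natDegree < M + 1) (w : ℂ) (hw : w ≠ 0) :
    conj ((reflC M f).eval w) = (conj w) ^ M * f.eval (conj w)⁻¹ := by
  have hwc : conj w ≠ 0 := by simpa using hw
  rw [reflC, eval_finset_sum, map_sum]
  rw [Polynomial.eval_eq_sum_range' hf, Finset.mul_sum]
  refine Finset.sum_congr rfl fun k hk => ?_
  have hkM : k ≤ M := Nat.lt_succ_iff.mp (Finset.mem_range.mp hk)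
  rw [eval_mul, eval_C, eval_pow, eval_X, map_mul, map_pow, Complex.conj_conj]
  have : (conj w) ^ (M - k) = (conj w) ^ M * ((conj w)⁻¹) ^ k := by
    rw [inv_pow]
    rw [eq_mul_inv_iff_mul_eq₀ (pow_ne_zero _ hwc), ← pow_add]
    congr 1
    omega
  rw [this]
  ring

lemma isCoprime_multiset_prod_right (p : Polynomial ℂ) (M : Multiset (Polynomial ℂ))
    (h : ∀ q ∈ M, IsCoprime p q) : IsCoprime p M.prod := by
  induction M using Multiset.induction_on with
  | empty => simpa using isCoprime_one_right
  | cons q M ih =>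
      rw [Multiset.prod_cons]
      exact (h q (Multiset.mem_cons_self _ _)).mul_right
        (ih fun r hr => h r (Multiset.mem_cons_of_mem hr))

lemma isCoprime_multiset_prod_left (M : Multiset (Polynomial ℂ)) (p : Polynomial ℂ)
    (h : ∀ q ∈ M, IsCoprime q p) : IsCoprime M.prod p :=
  (isCoprime_multiset_prod_right p M fun q hq => (h q hq).symm).symm

end Helpers

/-- The "poles inside" decomposition: the restriction to the unit circle of a rational
function of `z` and `z̄` with nonvanishing denominator on the circle can be written as
`r₁(z) + conj (r₂(z))`, where `r₁` and `r₂` are rational functions of one variable all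
of whose poles lie in the open unit disc and which have no pole at infinity. -/
theorem poles_inside_decomposition_on_circle
    (P Q : MvPolynomial (Fin 2) ℂ)
    (hQ : ∀ z : ℂ, ‖z‖ = 1 → MvPolynomial.eval ![z, conj z] Q ≠ 0) :
    ∃ p₁ q₁ p₂ q₂ : Polynomial ℂ,
      (∀ z : ℂ, q₁.eval z = 0 → ‖z‖ < 1) ∧
      (∀ z : ℂ, q₂.eval z = 0 → ‖z‖ < 1) ∧
      p₁.degree ≤ q₁.degree ∧ p₂.degree ≤ q₂.degree ∧
      ∀ z : ℂ, ‖z‖ = 1 →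
        MvPolynomial.eval ![z, conj z] P / MvPolynomial.eval ![z, conj z] Q
          = p₁.eval z / q₁.eval z + conj (p₂.eval z / q₂.eval z) := by
  classical
  open Polynomial in
  obtain ⟨A, j, hA⟩ := exists_laurent P
  obtain ⟨B, l, hB⟩ := exists_laurent Q
  set N : Polynomial ℂ := A * X ^ l with hNdef
  set D : Polynomial ℂ := B * X ^ j with hDdef
  -- the denominator does not vanish on the circle
  have hD_circle : ∀ z : ℂ, ‖z‖ = 1 → D.eval z ≠ 0 := by
    intro z hz
    have h0 : z ≠ 0 := circle_ne_zero hz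
    have hBz : B.eval z ≠ 0 := by
      intro hB0
      exact hQ z hz (by rw [hB z hz, hB0, zero_div])
    simp only [hDdef, eval_mul, eval_pow, eval_X]
    exact mul_ne_zero hBz (pow_ne_zero _ h0)
  have hD0 : D ≠ 0 := by
    intro h
    exact hD_circle 1 (by simp) (by rw [h, eval_zero])
  -- the original fraction equals N/D on the circle
  have hF : ∀ z : ℂ, ‖z‖ = 1 →
      MvPolynomial.eval ![z, conj z] P / MvPolynomial.eval ![z, conj z] Q
        = N.eval z / D.eval z := by
    intro z hz
    have h0 : z ≠ 0 := circle_ne_zero hz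
    have hBz : B.eval z ≠ 0 := by
      intro hB0
      exact hQ z hz (by rw [hB z hz, hB0, zero_div])
    rw [hA z hz, hB z hz]
    simp only [hNdef, hDdef, eval_mul, eval_pow, eval_X]
    rw [div_div_div_comm]
    rw [div_div_eq_mul_div, div_mul_eq_mul_div, div_div]
  -- factor D into inside and outside parts
  set a : ℂ := D.leadingCoeff with hadef
  have ha : a ≠ 0 := leadingCoeff_ne_zero.mpr hD0
  have hcard : D.roots.card = D.natDegree :=
    (splits_iff_card_roots).mp (IsAlgClosed.splits D)
  have hfac := C_leadingCoeff_mul_prod_multiset_X_sub_C hcard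
  set S : Multiset ℂ := D.roots.filter (fun ρ => ‖ρ‖ < 1) with hSdef
  set T : Multiset ℂ := D.roots.filter (fun ρ => ¬ ‖ρ‖ < 1) with hTdef
  have hST : S + T = D.roots := Multiset.filter_add_not _ _
  set Din : Polynomial ℂ := (S.map fun ρ => X - C ρ).prod with hDindef
  set Dout : Polynomial ℂ := (T.map fun ρ => X - C ρ).prod with hDoutdef
  have hMin : Din.Monic := monic_multiset_prod_of_monic _ _ (fun ρ _ => monic_X_sub_C ρ)
  have hMout : Dout.Monic := monic_multiset_prod_of_monic _ _ (fun ρ _ => monic_X_sub_C ρ)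
  have hDfac : D = C a * (Din * Dout) := by
    rw [← hfac]
    congr 1
    rw [hDindef, hDoutdef, ← Multiset.prod_add, ← Multiset.map_add, hST]
  -- roots of Din are inside
  have hDin_root : ∀ z : ℂ, Din.eval z = 0 → ‖z‖ < 1 := by
    intro z hzz
    rw [hDindef, eval_multiset_prod] at hzz
    obtain ⟨f, hf, hf0⟩ := Multiset.mem_map.mp (Multiset.prod_eq_zero_iff.mp hzz)
    obtain ⟨ρ, hρ, rfl⟩ := Multiset.mem_map.mp hf
    rw [eval_sub, eval_X, eval_C, sub_eq_zero] at hf0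
    rw [hf0]
    exact (Multiset.mem_filter.mp hρ).2
  -- roots of Dout are strictly outside
  have hDout_root : ∀ w : ℂ, Dout.eval w = 0 → 1 < ‖w‖ := by
    intro w hww
    rw [hDoutdef, eval_multiset_prod] at hww
    obtain ⟨f, hf, hf0⟩ := Multiset.mem_map.mp (Multiset.prod_eq_zero_iff.mp hww)
    obtain ⟨ρ, hρ, rfl⟩ := Multiset.mem_map.mp hf
    rw [eval_sub, eval_X, eval_C, sub_eq_zero] at hf0
    subst hf0
    obtain ⟨hmem, hout⟩ := Multiset.mem_filter.mp hρ
    have hroot : D.eval w = 0 := (mem_roots hD0).mp hmem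
    have hne : ‖w‖ ≠ 1 := fun h => hD_circle w h hroot
    push_neg at hout
    exact lt_of_le_of_ne hout (Ne.symm hne)
  -- Din and Dout are coprime
  have hcop : IsCoprime Din Dout := by
    rw [hDindef, hDoutdef]
    refine isCoprime_multiset_prod_left _ _ (fun f hf => ?_)
    obtain ⟨ρ, hρ, rfl⟩ := Multiset.mem_map.mp hf
    refine isCoprime_multiset_prod_right _ _ (fun g hg => ?_)
    obtain ⟨σ, hσ, rfl⟩ := Multiset.mem_map.mp hg
    refine isCoprime_X_sub_C_of_isUnit_sub ?_
    have h1 : ‖ρ‖ < 1 := (Multiset.mem_filter.mp hρ).2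
    have h2 : ¬ ‖σ‖ < 1 := (Multiset.mem_filter.mp hσ).2
    refine (sub_ne_zero_of_ne ?_).isUnit
    intro h; subst h; exact h2 h1
  obtain ⟨α, β, hαβ⟩ := hcop
  -- partial-fraction data
  set N' : Polynomial ℂ := C a⁻¹ * N with hN'def
  set u' : Polynomial ℂ := (N' * β) %ₘ Din with hu'def
  set s : Polynomial ℂ := (N' * β) /ₘ Din with hsdef
  set v' : Polynomial ℂ := (N' * α) %ₘ Dout with hv'def
  set t : Polynomial ℂ := (N' * α) /ₘ Dout with htdef
  set π : Polynomial ℂ := s + t with hπdef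
  set m : ℕ := π.natDegree with hmdef
  set d : ℕ := Dout.natDegree with hddef
  set V : Polynomial ℂ := π * Dout + v' with hVdef
  have e1 : u' + Din * s = N' * β := modByMonic_add_div _ _
  have e2 : v' + Dout * t = N' * α := modByMonic_add_div _ _
  have hN'eq : N' = u' * Dout + V * Din := by
    have h3 : N' * (α * Din + β * Dout) = N' := by rw [hαβ, mul_one]
    rw [hVdef, hπdef]
    linear_combination (-1 : Polynomial ℂ) * h3 - Din * e2 - Dout * e1
  -- degree bookkeeping for V
  have hv'deg : v'.degree ≤ Dout.degree := le_of_lt (degree_modByMonic_lt _ hMout)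
  have hVdeg : V.natDegree < m + d + 1 := by
    refine Nat.lt_succ_of_le ?_
    refine (natDegree_add_le _ _).trans (max_le ?_ ?_)
    · exact (natDegree_mul_le).trans (by rw [hmdef, hddef])
    · exact le_trans (natDegree_le_natDegree hv'deg) (by omega)
  -- the four polynomials
  refine ⟨u', Din, reflC (m + d) V, X ^ m * reflC d Dout, hDin_root, ?_, ?_, ?_, ?_⟩
  · -- roots of q₂ are inside
    intro w hw
    rcases eq_or_ne w 0 with rfl | hw0
    · simp
    rw [eval_mul, eval_pow, eval_X, mul_eq_zero] at hw
    rcases hw with hw | hw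
    · exact absurd hw (pow_ne_zero _ hw0)
    have hwc : conj w ≠ 0 := by simpa using hw0
    have := reflC_eval (f := Dout) (M := d) (by rw [hddef]; omega) w hw0
    rw [hw, map_zero] at this
    have hzero : Dout.eval ((conj w)⁻¹) = 0 := by
      rcases mul_eq_zero.mp this.symm with h | h
      · exact absurd h (pow_ne_zero _ hwc)
      · exact h
    have := hDout_root _ hzero
    rw [norm_inv, Complex.norm_conj] at this
    rw [lt_inv_comm₀] at this
    · simpa using this
    · norm_num
    · simpa using hw0
  · -- degree p₁ ≤ degree q₁
    exact le_of_lt (degree_modByMonic_lt _ hMin)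
  · -- degree p₂ ≤ degree q₂
    refine (reflC_degree_le _ _).trans ?_
    have hcoeff : (X ^ m * reflC d Dout).coeff (m + d) = conj (Dout.coeff 0) := by
      rw [add_comm m d, coeff_X_pow_mul, reflC_coeff_M]
    have hD00 : Dout.coeff 0 ≠ 0 := by
      rw [coeff_zero_eq_eval_zero]
      intro h
      have := hDout_root 0 h
      simp only [norm_zero] at this
      linarith
    exact le_degree_of_ne_zero (by rw [hcoeff]; simpa using hD00)
  · -- the identity on the circle
    intro z hz
    have h0 : z ≠ 0 := circle_ne_zero hz
    have hzc : conj z ≠ 0 := by simpa using h0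
    have hzci : (conj z)⁻¹ = z := by rw [circle_conj_eq_inv hz, inv_inv]
    have hDinz : Din.eval z ≠ 0 := fun h => absurd hz (by have := hDin_root z h; linarith)
    have hDoutz : Dout.eval z ≠ 0 := fun h => absurd hz (by have := hDout_root z h; linarith)
    -- compute the conjugate term
    have hp2 : conj ((reflC (m + d) V).eval z) = (conj z) ^ (m + d) * V.eval z := by
      rw [reflC_eval hVdeg z h0, hzci]
    have hq2 : conj ((X ^ m * reflC d Dout).eval z)
        = (conj z) ^ (m + d) * Dout.eval z := by
      rw [eval_mul, eval_pow, eval_X, map_mul, map_pow,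
        reflC_eval (f := Dout) (M := d) (by rw [hddef]; omega) z h0, hzci, pow_add]
      ring
    rw [hF z hz, map_div₀, hp2, hq2,
      mul_div_mul_left _ _ (pow_ne_zero _ hzc)]
    -- now a pure rational-function identity
    have hDz : D.eval z = a * (Din.eval z * Dout.eval z) := by
      rw [hDfac]; simp [eval_mul]
    have hNz : N.eval z = a * N'.eval z := by
      rw [hN'def, eval_C_mul, ← mul_assoc, mul_inv_cancel₀ ha, one_mul]
    have hkey : N'.eval z = u'.eval z * Dout.eval z + V.eval z * Din.eval z := by
      have := congrArg (eval z) hN'eq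
      simpa [eval_add, eval_mul] using this
    rw [hDz, hNz, mul_div_mul_left _ _ ha,
      div_add_div _ _ hDinz hDoutz, hkey]
    congr 1
    ring
end

section
/- Let f and g be functions holomorphic on an open subset of ℂ containing the closed unit disc {z : |z| ≤ 1}, and suppose f(z) = conj(g(z)) for every z with |z| = 1. Then there exists a constant c ∈ ℂ such that f(z) = c and g(z) = conj(c) for every z with |z| ≤ 1. (Schwarz reflection across the unit circle produces a bounded entire function, which is constant by Liouville's theorem.) -/
open ComplexConjugate

lemma aux_const_of_real_boundary
    (U : Set ℂ) (hU : IsOpen U) (hsub : Metric.closedBall (0:ℂ) 1 ⊆ U)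
    (h : ℂ → ℂ) (hd : DifferentiableOn ℂ h U)
    (him : ∀ z ∈ Metric.sphere (0:ℂ) 1, (h z).im = 0) :
    ∀ z ∈ Metric.closedBall (0:ℂ) 1, h z = h 0 := by
  have hball : Metric.ball (0:ℂ) 1 ⊆ U := (Metric.ball_subset_closedBall).trans hsub
  have hcl : closure (Metric.ball (0:ℂ) 1) = Metric.closedBall (0:ℂ) 1 :=
    closure_ball 0 one_ne_zero
  have hfr : frontier (Metric.ball (0:ℂ) 1) = Metric.sphere (0:ℂ) 1 :=
    frontier_ball 0 one_ne_zero
  -- Step 1: Im h = 0 on the closed ball, via max modulus for exp(± i h)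
  have him_cl : ∀ z ∈ Metric.closedBall (0:ℂ) 1, (h z).im = 0 := by
    intro z hz
    have hz' : z ∈ closure (Metric.ball (0:ℂ) 1) := by rw [hcl]; exact hz
    have key : ∀ (a : ℂ), a.re = 0 → ‖Complex.exp (a * h z)‖ ≤ 1 := by
      intro a ha
      have hd' : DiffContOnCl ℂ (fun w => Complex.exp (a * h w)) (Metric.ball (0:ℂ) 1) := by
        refine ⟨DifferentiableOn.cexp ((hd.mono hball).const_mul a), ContinuousOn.cexp ?_⟩
        rw [hcl]
        exact (hd.continuousOn.mono hsub).const_smul a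
      refine Complex.norm_le_of_forall_mem_frontier_norm_le Metric.isBounded_ball hd' ?_ hz'
      intro w hw
      rw [hfr] at hw
      rw [Complex.norm_exp, Complex.mul_re, him w hw, ha]
      simp
    have h1 := key Complex.I (by simp)
    have h2 := key (-Complex.I) (by simp)
    rw [Complex.norm_exp] at h1 h2
    have e1 : (Complex.I * h z).re = -(h z).im := by simp [Complex.mul_re]
    have e2 : ((-Complex.I) * h z).re = (h z).im := by simp [Complex.mul_re]
    rw [e1, Real.exp_le_one_iff] at h1
    rw [e2, Real.exp_le_one_iff] at h2
    linarith
  -- Step 2: h is constant on the open ball, by the open mapping theorem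
  have han : AnalyticOnNhd ℂ h (Metric.ball (0:ℂ) 1) :=
    fun z hz => (hd.analyticOnNhd hU) z (hball hz)
  have hco : ∃ w, ∀ z ∈ Metric.ball (0:ℂ) 1, h z = w := by
    rcases han.is_constant_or_isOpen (convex_ball (0:ℂ) 1).isPreconnected with hc | ho
    · exact hc
    · exfalso
      have hopen : IsOpen (h '' Metric.ball (0:ℂ) 1) :=
        ho _ subset_rfl Metric.isOpen_ball
      have h0mem : h 0 ∈ h '' Metric.ball (0:ℂ) 1 :=
        ⟨0, Metric.mem_ball_self one_pos, rfl⟩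
      rcases Metric.isOpen_iff.1 hopen _ h0mem with ⟨ε, hε, hb⟩
      have hmem : h 0 + (ε/2) * Complex.I ∈ h '' Metric.ball (0:ℂ) 1 := by
        apply hb
        rw [Metric.mem_ball, dist_eq_norm]
        simp only [add_sub_cancel_left]
        rw [norm_mul, Complex.norm_I, mul_one]
        have : ((ε:ℂ)/2) = ((ε/2 : ℝ) : ℂ) := by push_cast; ring
        rw [this, Complex.norm_real, Real.norm_eq_abs, abs_of_pos (half_pos hε)]
        exact half_lt_self hε
      rcases hmem with ⟨w, hw, hww⟩
      have : (h w).im = 0 := him_cl w (Metric.ball_subset_closedBall hw)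
      rw [hww] at this
      have : (h 0).im + ε/2 = 0 := by
        simpa [Complex.add_im, Complex.mul_im, Complex.I_im, Complex.I_re] using this
      have h0im : (h 0).im = 0 := him_cl 0 (Metric.mem_closedBall_self one_pos.le)
      rw [h0im] at this
      linarith
  rcases hco with ⟨w, hw⟩
  -- Step 3: extend to the closed ball by continuity
  have heq : Set.EqOn h (fun _ => w) (Metric.closedBall (0:ℂ) 1) :=
    Set.EqOn.of_subset_closure (fun z hz => hw z hz)
      (hd.continuousOn.mono hsub) continuousOn_const
      Metric.ball_subset_closedBall (le_of_eq hcl.symm)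
  intro z hz
  rw [heq hz, heq (Metric.mem_closedBall_self one_pos.le)]

/-- If `f` and `g` are holomorphic on an open set containing the closed unit disc and
`f = conj g` on the unit circle, then `f` and `g` are constant on the closed unit disc:
Schwarz reflection produces a bounded entire function, which is constant by Liouville. -/
theorem holomorphic_eq_conj_on_circle_constant
    (U : Set ℂ) (hU : IsOpen U) (hsub : {z : ℂ | ‖z‖ ≤ 1} ⊆ U)
    (f g : ℂ → ℂ) (hf : DifferentiableOn ℂ f U) (hg : DifferentiableOn ℂ g U)
    (hbd : ∀ z : ℂ, ‖z‖ = 1 → f z = conj (g z)) :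
    ∃ c : ℂ, ∀ z : ℂ, ‖z‖ ≤ 1 → f z = c ∧ g z = conj c := by
  have hsub' : Metric.closedBall (0:ℂ) 1 ⊆ U := by
    intro z hz
    exact hsub (by simpa [Complex.norm_def] using Metric.mem_closedBall.1 hz |>.trans_eq rfl)
  have hsphere : ∀ z ∈ Metric.sphere (0:ℂ) 1, ‖z‖ = 1 := by
    intro z hz
    simpa [Complex.norm_def, Complex.dist_eq] using Metric.mem_sphere.1 hz
  -- h₁ = f + g is real on the circle
  have h1 := aux_const_of_real_boundary U hU hsub' (fun z => f z + g z) (hf.add hg)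
    (fun z hz => by show (f z + g z).im = 0; rw [hbd z (hsphere z hz)]; simp)
  -- h₂ = I * (f - g) is real on the circle
  have h2 := aux_const_of_real_boundary U hU hsub' (fun z => Complex.I * (f z - g z))
    ((hf.sub hg).const_mul Complex.I)
    (fun z hz => by show (Complex.I * (f z - g z)).im = 0; rw [hbd z (hsphere z hz)]; simp [Complex.mul_im, Complex.sub_re])
  refine ⟨f 0, fun z hz => ?_⟩
  have hzball : z ∈ Metric.closedBall (0:ℂ) 1 := by
    simpa [Metric.mem_closedBall, Complex.dist_eq] using hz
  have hz1 := h1 z hzball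
  have hz2 := h2 z hzball
  have hz2' : f z - g z = f 0 - g 0 := by
    have := mul_left_cancel₀ Complex.I_ne_zero hz2
    exact this
  have hfz : f z = f 0 := by linear_combination (hz1 + hz2') / 2
  have hgz : g z = g 0 := by linear_combination (hz1 - hz2') / 2
  have hone : (1:ℂ) ∈ Metric.closedBall (0:ℂ) 1 := by
    simp [Metric.mem_closedBall, Complex.dist_eq]
  have hf1 : f 1 = f 0 := by
    have := h1 1 hone; have := h2 1 hone
    have e1 := h1 1 hone
    have e2 := h2 1 hone
    have e2' : f 1 - g 1 = f 0 - g 0 := mul_left_cancel₀ Complex.I_ne_zero e2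
    linear_combination (e1 + e2') / 2
  have hg1 : g 1 = g 0 := by
    have e1 := h1 1 hone
    have e2 := h2 1 hone
    have e2' : f 1 - g 1 = f 0 - g 0 := mul_left_cancel₀ Complex.I_ne_zero e2
    linear_combination (e1 - e2') / 2
  have hrel : f 1 = conj (g 1) := hbd 1 (by simp)
  rw [hf1, hg1] at hrel
  refine ⟨hfz, ?_⟩
  rw [hgz, hrel, Complex.conj_conj]
end

section
/- Let P and Q be polynomials in two variables over ℂ such that Q(z, conj z) ≠ 0 for every z with |z| = 1. Then the Dirichlet problem on the unit disc with boundary data P(z, conj z)/Q(z, conj z) has an explicit solution of rational form: there exist one-variable polynomials p₁, q₁, p₂, q₂ over ℂ with q₁ and q₂ nonvanishing on the closed unit disc, such that the function u(z) := p₁(z)/q₁(z) + conj(p₂(z)/q₂(z)) is continuous on the closed unit disc, is harmonic on the open unit disc (its real and imaginary parts are twice continuously differentiable with vanishing Laplacian there), and satisfies u(z) = P(z, conj z)/Q(z, conj z) for every z with |z| = 1. -/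
open ComplexConjugate
open Polynomial

lemma eval_reflect (p : Polynomial ℂ) (n : ℕ) (h : p.natDegree ≤ n) (z : ℂ) (hz : z ≠ 0) :
    (p.reflect n).eval z = z ^ n * p.eval z⁻¹ := by
  have : Invertible z⁻¹ := invertibleOfNonzero (inv_ne_zero hz)
  have H := Polynomial.eval₂_reflect_mul_pow (RingHom.id ℂ) z⁻¹ n p h
  rw [invOf_eq_inv, inv_inv] at H
  simp only [eval₂_eq_eval_map, Polynomial.map_id] at H
  rw [← H, mul_left_comm, ← mul_pow, mul_inv_cancel₀ hz, one_pow, mul_one]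

lemma eval_conj (p : Polynomial ℂ) (z : ℂ) :
    conj (p.eval z) = (p.map (starRingEnd ℂ)).eval (conj z) := by
  rw [Polynomial.eval_map, ← Polynomial.eval₂_at_apply]

lemma mv_to_single (F : MvPolynomial (Fin 2) ℂ) :
    ∃ (n : ℕ) (f : Polynomial ℂ), ∀ z : ℂ, z ≠ 0 →
      MvPolynomial.eval ![z, z⁻¹] F = f.eval z / z ^ n := by
  induction F using MvPolynomial.induction_on with
  | C c => exact ⟨0, Polynomial.C c, fun z hz => by simp⟩
  | add p q hp hq =>
    obtain ⟨n, f, hf⟩ := hp; obtain ⟨m, g, hg⟩ := hq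
    refine ⟨n + m, f * X ^ m + g * X ^ n, fun z hz => ?_⟩
    rw [map_add, hf z hz, hg z hz,
      div_add_div _ _ (pow_ne_zero n hz) (pow_ne_zero m hz), pow_add]
    simp only [eval_add, eval_mul, eval_pow, eval_X]
    ring
  | mul_X p i hp =>
    obtain ⟨n, f, hf⟩ := hp
    fin_cases i
    · refine ⟨n, f * X, fun z hz => ?_⟩
      rw [map_mul, hf z hz, MvPolynomial.eval_X]
      simp only [show (⟨0, by norm_num⟩ : Fin 2) = 0 from rfl, Matrix.cons_val_zero, eval_mul, eval_X]
      ring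
    · refine ⟨n + 1, f, fun z hz => ?_⟩
      rw [map_mul, hf z hz, MvPolynomial.eval_X]
      simp only [show (⟨1, by norm_num⟩ : Fin 2) = 1 from rfl, Matrix.cons_val_one, Matrix.head_cons, Matrix.cons_val_zero]
      rw [pow_succ, ← div_div, div_eq_mul_inv (eval z f / z ^ n)]

lemma split_roots_aux (d : ℕ) : ∀ M : Polynomial ℂ, M.natDegree = d → M ≠ 0 →
    (∀ z : ℂ, ‖z‖ = 1 → M.eval z ≠ 0) →
    ∃ Min Mout : Polynomial ℂ, M = Min * Mout ∧ Min.Monic ∧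
      (∀ z : ℂ, Min.eval z = 0 → ‖z‖ < 1) ∧
      (∀ z : ℂ, ‖z‖ ≤ 1 → Mout.eval z ≠ 0) := by
  induction d using Nat.strong_induction_on with
  | _ d ih =>
  intro M hd hM0 hM
  by_cases hroot : ∃ a : ℂ, ‖a‖ ≤ 1 ∧ M.eval a = 0
  · obtain ⟨a, ha1, ha0⟩ := hroot
    have ha : ‖a‖ < 1 := lt_of_le_of_ne ha1 (fun h => hM a h ha0)
    obtain ⟨M', hM'⟩ := dvd_iff_isRoot.2 ha0
    have hM'0 : M' ≠ 0 := fun h => hM0 (by simp [hM', h])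
    have hXa : (X - C a) ≠ 0 := X_sub_C_ne_zero a
    have hdeg : M'.natDegree < d := by
      subst hd
      rw [hM', natDegree_mul hXa hM'0, natDegree_X_sub_C]
      omega
    have hM'circ : ∀ z : ℂ, ‖z‖ = 1 → M'.eval z ≠ 0 := by
      intro z hz hez
      exact hM z hz (by simp [hM', hez])
    obtain ⟨Min, Mout, heq, hmon, hin, hout⟩ := ih M'.natDegree hdeg M' rfl hM'0 hM'circ
    refine ⟨(X - C a) * Min, Mout, by rw [hM', heq, mul_assoc], (monic_X_sub_C a).mul hmon,
      fun z hz => ?_, hout⟩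
    simp only [eval_mul, mul_eq_zero, eval_sub, eval_X, eval_C, sub_eq_zero] at hz
    rcases hz with rfl | hz
    · exact ha
    · exact hin z hz
  · push_neg at hroot
    exact ⟨1, M, by simp, monic_one, fun z hz => by simp at hz,
      fun z hz h => hroot z hz h⟩

lemma split_roots (M : Polynomial ℂ) (hM0 : M ≠ 0)
    (hM : ∀ z : ℂ, ‖z‖ = 1 → M.eval z ≠ 0) :
    ∃ Min Mout : Polynomial ℂ, M = Min * Mout ∧ Min.Monic ∧
      (∀ z : ℂ, Min.eval z = 0 → ‖z‖ < 1) ∧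
      (∀ z : ℂ, ‖z‖ ≤ 1 → Mout.eval z ≠ 0) :=
  split_roots_aux M.natDegree M rfl hM0 hM

lemma coprime_split (Min Mout : Polynomial ℂ) (hmon : Min.Monic)
    (hin : ∀ z : ℂ, Min.eval z = 0 → ‖z‖ < 1)
    (hout : ∀ z : ℂ, ‖z‖ ≤ 1 → Mout.eval z ≠ 0) :
    IsCoprime Min Mout := by
  apply isCoprime_of_irreducible_dvd
  · rintro ⟨h1, -⟩; exact hmon.ne_zero h1
  · rintro p hp ⟨a1, rfl⟩ ⟨a2, rfl⟩
    have hp0 : p ≠ 0 := hp.ne_zero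
    have : 0 < p.degree := degree_pos_of_ne_zero_of_nonunit hp0 hp.not_isUnit
    obtain ⟨a, ha⟩ := Complex.exists_root this
    have h1 : ‖a‖ < 1 := hin a (by simp [ha.eq_zero])
    exact hout a h1.le (by simp [ha.eq_zero])

lemma decompose (N M : Polynomial ℂ)
    (hM : ∀ z : ℂ, ‖z‖ = 1 → M.eval z ≠ 0) :
    ∃ p₁ q₁ p₂ q₂ : Polynomial ℂ,
      (∀ z : ℂ, ‖z‖ ≤ 1 → q₁.eval z ≠ 0 ∧ q₂.eval z ≠ 0) ∧
      ∀ z : ℂ, ‖z‖ = 1 →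
        p₁.eval z / q₁.eval z + conj (p₂.eval z / q₂.eval z) = N.eval z / M.eval z := by
  have hM0 : M ≠ 0 := fun h => hM 1 (by simp) (by simp [h])
  obtain ⟨Min, Mout, hMeq, hmon, hin, hout⟩ := split_roots M hM0 hM
  obtain ⟨A, B, hAB⟩ := coprime_split Min Mout hmon hin hout
  set d := Min.natDegree with hd
  set T := (N * B) %ₘ Min with hT
  set S := (N * B) /ₘ Min with hS
  have hST : T + Min * S = N * B := modByMonic_add_div (N * B) Min
  refine ⟨N * A + S * Mout, Mout, (X * reflect (d - 1) T).map (starRingEnd ℂ),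
    (reflect d Min).map (starRingEnd ℂ), ?_, ?_⟩
  · intro w hw
    refine ⟨hout w hw, ?_⟩
    have key : (reflect d Min).eval (conj w) ≠ 0 := by
      rcases eq_or_ne (conj w) 0 with h0 | h0
      · rw [h0, ← coeff_zero_eq_eval_zero, coeff_reflect, revAt_le (Nat.zero_le d)]
        simp [hd, hmon.coeff_natDegree]
      · rw [eval_reflect _ _ le_rfl _ h0]
        refine mul_ne_zero (pow_ne_zero _ h0) (fun hz => ?_)
        have hlt := hin _ hz
        have habs : ‖(conj w)‖ ≤ 1 := by rwa [Complex.norm_conj]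
        rw [norm_inv] at hlt
        have hv : 0 < ‖(conj w)‖ := norm_pos_iff.mpr h0
        nlinarith [mul_inv_cancel₀ (ne_of_gt hv)]
    intro h
    apply key
    have heq := eval_conj (reflect d Min) (conj w)
    rw [Complex.conj_conj] at heq
    have h2 := heq.trans h
    have h3 := congrArg conj h2
    simpa using h3
  · intro z hz
    have hz0 : z ≠ 0 := fun h => by simp [h] at hz
    have hcz : conj z = z⁻¹ := by
      apply eq_inv_of_mul_eq_one_left
      rw [mul_comm, Complex.mul_conj]
      norm_cast
      rw [Complex.normSq_eq_norm_sq, hz]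
      norm_num
    have hMin : Min.eval z ≠ 0 := fun h => absurd (hin z h) (by rw [hz]; exact lt_irrefl 1)
    have hMout : Mout.eval z ≠ 0 := hout z hz.le
    -- conj part equals T(z)/Min(z)
    have hconj : conj (((X * reflect (d - 1) T).map (starRingEnd ℂ)).eval z /
        ((reflect d Min).map (starRingEnd ℂ)).eval z) = T.eval z / Min.eval z := by
      rw [map_div₀]
      have e1 : conj (((X * reflect (d - 1) T).map (starRingEnd ℂ)).eval z)
          = (X * reflect (d - 1) T).eval z⁻¹ := by
        have := eval_conj ((X * reflect (d - 1) T).map (starRingEnd ℂ)) z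
        rw [this, hcz, map_map,
          show ((starRingEnd ℂ).comp (starRingEnd ℂ)) = RingHom.id ℂ from
            RingHom.ext fun x => Complex.conj_conj x, Polynomial.map_id]
      have e2 : conj (((reflect d Min).map (starRingEnd ℂ)).eval z)
          = (reflect d Min).eval z⁻¹ := by
        have := eval_conj ((reflect d Min).map (starRingEnd ℂ)) z
        rw [this, hcz, map_map,
          show ((starRingEnd ℂ).comp (starRingEnd ℂ)) = RingHom.id ℂ from
            RingHom.ext fun x => Complex.conj_conj x, Polynomial.map_id]
      rw [e1, e2, eval_reflect Min d le_rfl z⁻¹ (inv_ne_zero hz0), inv_inv]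
      rcases eq_or_ne T 0 with hT0 | hT0
      · simp [hT0]
      · have hdlt : T.degree < Min.degree := degree_modByMonic_lt (N * B) hmon
        have hd1 : T.natDegree < d := natDegree_lt_natDegree hT0 hdlt
        have hTd : T.natDegree ≤ d - 1 := by omega
        rw [eval_mul, eval_X, eval_reflect T (d - 1) hTd z⁻¹ (inv_ne_zero hz0), inv_inv]
        have hdd : d = 1 + (d - 1) := by omega
        rw [← mul_assoc, ← pow_succ']
        rw [show (d - 1) + 1 = d by omega]
        field_simp
    rw [hconj, hMeq, eval_mul]
    simp only [eval_add, eval_mul]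
    have h1 : A.eval z * Min.eval z + B.eval z * Mout.eval z = 1 := by
      have := congrArg (Polynomial.eval z) hAB
      simpa using this
    have h2 : T.eval z + Min.eval z * S.eval z = N.eval z * B.eval z := by
      have := congrArg (Polynomial.eval z) hST
      simpa using this
    rw [div_add_div _ _ hMout hMin, div_eq_div_iff (mul_ne_zero hMout hMin) (mul_ne_zero hMin hMout)]
    linear_combination (eval z Min * eval z Mout) * (eval z N * h1 + eval z Mout * h2)


/-- The Laplacian of a real-valued function on `ℂ ≃ ℝ²` at a point: the sum of the
second derivatives in the directions `1` and `I`. -/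
noncomputable def laplacianAt (v : ℂ → ℝ) (z : ℂ) : ℝ :=
  fderiv ℝ (fun w => fderiv ℝ v w 1) z 1
    + fderiv ℝ (fun w => fderiv ℝ v w Complex.I) z Complex.I

/-- A real-valued function is harmonic on an open set if it is `C²` there with
identically vanishing Laplacian. -/
def HarmonicOnSet (v : ℂ → ℝ) (s : Set ℂ) : Prop :=
  ContDiffOn ℝ 2 v s ∧ ∀ z ∈ s, laplacianAt v z = 0

lemma fderiv_comp_clm (L : ℂ →L[ℝ] ℝ) (F : ℂ → ℂ) {w : ℂ} (hF : DifferentiableAt ℂ F w)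
    (v : ℂ) : fderiv ℝ (fun z => L (F z)) w v = L (v * deriv F w) := by
  have h1 := (hF.hasFDerivAt.restrictScalars ℝ)
  have h2 := (L.hasFDerivAt.comp w h1)
  rw [show (fun z => L (F z)) = (⇑L ∘ F) from rfl, h2.fderiv]
  simp only [ContinuousLinearMap.coe_comp', Function.comp_apply,
    ContinuousLinearMap.coe_restrictScalars']
  congr 1
  calc (fderiv ℂ F w) v = (fderiv ℂ F w) (v • (1 : ℂ)) := by simp
    _ = v • (fderiv ℂ F w) 1 := (fderiv ℂ F w).map_smul v 1
    _ = v * deriv F w := by rw [fderiv_apply_one_eq_deriv]; simp [smul_eq_mul]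

lemma harmonic_of_holo (F : ℂ → ℂ) (s : Set ℂ) (hs : IsOpen s)
    (hF : DifferentiableOn ℂ F s) (L : ℂ →L[ℝ] ℝ) :
    HarmonicOnSet (fun z => L (F z)) s := by
  have han : AnalyticOnNhd ℂ F s := hF.analyticOnNhd hs
  have hd : ∀ w ∈ s, DifferentiableAt ℂ F w :=
    fun w hw => (han w hw).differentiableAt
  have han' : AnalyticOnNhd ℂ (deriv F) s := han.deriv_of_isOpen hs
  have hd' : ∀ w ∈ s, DifferentiableAt ℂ (deriv F) w :=
    fun w hw => (han' w hw).differentiableAt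
  constructor
  · exact L.contDiff.comp_contDiffOn
      ((han.contDiffOn hs.uniqueDiffOn (n := 2)).restrict_scalars ℝ)
  · intro z hz
    have key : ∀ v : ℂ, fderiv ℝ (fun w => fderiv ℝ (fun z => L (F z)) w v) z v
        = L (v * (v * deriv (deriv F) z)) := by
      intro v
      have heq : (fun w => fderiv ℝ (fun z => L (F z)) w v)
          =ᶠ[nhds z] (fun w => L (v * deriv F w)) := by
        filter_upwards [hs.mem_nhds hz] with w hw
        exact fderiv_comp_clm L F (hd w hw) v
      rw [heq.fderiv_eq]
      have : fderiv ℝ (fun w => L (v * deriv F w)) z v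
          = fderiv ℝ (fun w => (L.comp ((ContinuousLinearMap.mul ℝ ℂ v).restrictScalars ℝ))
              (deriv F w)) z v := by rfl
      rw [this, fderiv_comp_clm _ (deriv F) (hd' z hz) v]
      rfl
    unfold laplacianAt
    rw [key 1, key Complex.I]
    rw [← map_add]
    convert map_zero L using 2
    have : Complex.I * Complex.I = -1 := Complex.I_mul_I
    linear_combination deriv (deriv F) z * this
open Polynomial in
lemma continuousOn_part (p q : Polynomial ℂ) (s : Set ℂ)
    (hq : ∀ z ∈ s, q.eval z ≠ 0) :
    ContinuousOn (fun z => p.eval z / q.eval z) s :=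
  (p.continuous.continuousOn).div (q.continuous.continuousOn) hq


/-- The Dirichlet problem on the unit disc with rational boundary data
`P(z, z̄)/Q(z, z̄)` has an explicit solution of the form `p₁/q₁ + conj (p₂/q₂)` with
`q₁, q₂` nonvanishing on the closed unit disc: this function is continuous on the closed
disc, harmonic on the open disc, and has the prescribed boundary values. -/
theorem dirichlet_problem_rational_data
    (P Q : MvPolynomial (Fin 2) ℂ)
    (hQ : ∀ z : ℂ, ‖z‖ = 1 → MvPolynomial.eval ![z, conj z] Q ≠ 0) :
    ∃ p₁ q₁ p₂ q₂ : Polynomial ℂ,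
      (∀ z : ℂ, ‖z‖ ≤ 1 → q₁.eval z ≠ 0 ∧ q₂.eval z ≠ 0) ∧
      ContinuousOn (fun z : ℂ => p₁.eval z / q₁.eval z + conj (p₂.eval z / q₂.eval z))
        {z : ℂ | ‖z‖ ≤ 1} ∧
      HarmonicOnSet (fun z : ℂ => (p₁.eval z / q₁.eval z + conj (p₂.eval z / q₂.eval z)).re)
        {z : ℂ | ‖z‖ < 1} ∧
      HarmonicOnSet (fun z : ℂ => (p₁.eval z / q₁.eval z + conj (p₂.eval z / q₂.eval z)).im)
        {z : ℂ | ‖z‖ < 1} ∧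
      ∀ z : ℂ, ‖z‖ = 1 →
        p₁.eval z / q₁.eval z + conj (p₂.eval z / q₂.eval z)
          = MvPolynomial.eval ![z, conj z] P / MvPolynomial.eval ![z, conj z] Q := by
  obtain ⟨nP, fP, hfP⟩ := mv_to_single P
  obtain ⟨nQ, fQ, hfQ⟩ := mv_to_single Q
  -- On the circle, conj z = z⁻¹
  have hcz : ∀ z : ℂ, ‖z‖ = 1 → conj z = z⁻¹ := by
    intro z hz
    apply eq_inv_of_mul_eq_one_left
    rw [mul_comm, Complex.mul_conj]
    norm_cast
    rw [Complex.normSq_eq_norm_sq, hz]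
    norm_num
  set N : Polynomial ℂ := fP * X ^ nQ with hN
  set M : Polynomial ℂ := fQ * X ^ nP with hM
  have hz0 : ∀ z : ℂ, ‖z‖ = 1 → z ≠ 0 := fun z hz h => by simp [h] at hz
  have hMcirc : ∀ z : ℂ, ‖z‖ = 1 → M.eval z ≠ 0 := by
    intro z hz
    have h0 := hz0 z hz
    have hQz := hQ z hz
    rw [hcz z hz, hfQ z h0] at hQz
    simp only [hM, eval_mul, eval_pow, eval_X]
    exact mul_ne_zero (fun h => hQz (by rw [h]; simp)) (pow_ne_zero _ h0)
  obtain ⟨p₁, q₁, p₂, q₂, hq, hbd⟩ := decompose N M hMcirc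
  have hopen : IsOpen {z : ℂ | ‖z‖ < 1} :=
    isOpen_lt continuous_norm continuous_const
  have hsub : {z : ℂ | ‖z‖ < 1} ⊆ {z : ℂ | ‖z‖ ≤ 1} :=
    fun z hz => le_of_lt (Set.mem_setOf_eq ▸ hz)
  have hd1 : DifferentiableOn ℂ (fun z => p₁.eval z / q₁.eval z) {z : ℂ | ‖z‖ < 1} :=
    (p₁.differentiable.differentiableOn).div (q₁.differentiable.differentiableOn)
      (fun z hz => (hq z (le_of_lt hz)).1)
  have hd2 : DifferentiableOn ℂ (fun z => p₂.eval z / q₂.eval z) {z : ℂ | ‖z‖ < 1} :=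
    (p₂.differentiable.differentiableOn).div (q₂.differentiable.differentiableOn)
      (fun z hz => (hq z (le_of_lt hz)).2)
  refine ⟨p₁, q₁, p₂, q₂, hq, ?_, ?_, ?_, ?_⟩
  · exact (continuousOn_part p₁ q₁ _ (fun z hz => (hq z hz).1)).add
      (Complex.continuous_conj.comp_continuousOn
        (continuousOn_part p₂ q₂ _ (fun z hz => (hq z hz).2)))
  · have := harmonic_of_holo (fun z => p₁.eval z / q₁.eval z + p₂.eval z / q₂.eval z)
      _ hopen (hd1.add hd2) Complex.reCLM
    convert this using 2 with z
    simp only [Complex.reCLM_apply, Complex.add_re, Complex.conj_re]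
  · have := harmonic_of_holo (fun z => p₁.eval z / q₁.eval z - p₂.eval z / q₂.eval z)
      _ hopen (hd1.sub hd2) Complex.imCLM
    convert this using 2 with z
    simp only [Complex.imCLM_apply, Complex.add_im, Complex.sub_im, Complex.conj_im]
    ring
  · intro z hz
    have h0 := hz0 z hz
    rw [hbd z hz, hcz z hz, hfP z h0, hfQ z h0, hN, hM]
    simp only [eval_mul, eval_pow, eval_X]
    have hQz : fQ.eval z ≠ 0 := by
      have hQz := hQ z hz
      rw [hcz z hz, hfQ z h0] at hQz
      exact fun h => hQz (by rw [h]; simp)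
    field_simp
end

section
/- Let U ⊆ ℂ be a connected open set containing a nonempty open interval I of the real axis, and let z : U → ℂ be an injective holomorphic function. Then there exists an open set V containing z(I) and a holomorphic function S : V → ℂ (the Schwarz function of the arc z(I)) such that S(z(t)) = conj(z(t)) for every t ∈ I. Moreover S is unique in the sense that if V is a connected open set containing z(I) and S₁, S₂ : V → ℂ are holomorphic with S₁(z(t)) = conj(z(t)) = S₂(z(t)) for all t ∈ I, then S₁ = S₂ on V. -/
open ComplexConjugate

open Set Filter Topology in
private lemma conj_comp_conj_hasDerivAt {z : ℂ → ℂ} {d v : ℂ} (h : HasDerivAt z d v) :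
    HasDerivAt (fun w => conj (z (conj w))) (conj d) (conj v) := by
  have h1 : HasFDerivAt z ((1 : ℂ →L[ℂ] ℂ).smulRight d) v := h.hasFDerivAt
  have h2 : HasFDerivAt z (((1 : ℂ →L[ℂ] ℂ).smulRight d).restrictScalars ℝ) v :=
    h1.restrictScalars ℝ
  have hc : ∀ x : ℂ, HasFDerivAt (fun w : ℂ => (conj w : ℂ))
      (Complex.conjCLE.toContinuousLinearMap) x := fun x =>
    Complex.conjCLE.toContinuousLinearMap.hasFDerivAt
  have h3 : HasFDerivAt (fun w => conj (z (conj w)))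
      ((Complex.conjCLE.toContinuousLinearMap.comp
        (((1 : ℂ →L[ℂ] ℂ).smulRight d).restrictScalars ℝ)).comp
        Complex.conjCLE.toContinuousLinearMap) (conj v) := by
    have hz' : HasFDerivAt z (((1 : ℂ →L[ℂ] ℂ).smulRight d).restrictScalars ℝ)
        ((conj : ℂ → ℂ) (conj v)) := by simpa using h2
    have hzv : HasFDerivAt (fun w : ℂ => (conj w : ℂ)) Complex.conjCLE.toContinuousLinearMap
        ((z ∘ (conj : ℂ → ℂ)) (conj v)) := hc _
    have hzv2 : HasFDerivAt (fun w : ℂ => (conj w : ℂ)) Complex.conjCLE.toContinuousLinearMap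
        (z (conj (conj v))) := hc _
    exact (hzv2.comp (conj (conj v)) hz').comp (conj v) (hc (conj v))
  have heq : ((Complex.conjCLE.toContinuousLinearMap.comp
        (((1 : ℂ →L[ℂ] ℂ).smulRight d).restrictScalars ℝ)).comp
        Complex.conjCLE.toContinuousLinearMap)
      = ((1 : ℂ →L[ℂ] ℂ).smulRight (conj d)).restrictScalars ℝ := by
    ext w
    simp [mul_comm, map_mul]
  rw [heq] at h3
  have := (hasFDerivAt_of_restrictScalars ℝ h3 rfl).hasDerivAt
  simpa using this

/-- Existence and uniqueness of the Schwarz function of an analytic arc: if `z` is an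
injective holomorphic function on a connected open set `U ⊆ ℂ` containing a nonempty open
interval `(a, b)` of the real axis, then there is a holomorphic function `S` on an open
neighborhood of the arc `z((a, b))` with `S(z(t)) = conj (z(t))` for all `t ∈ (a, b)`;
moreover, any two holomorphic functions on a connected open neighborhood of the arc with
this property coincide on that neighborhood. -/
theorem schwarz_function_exists_unique
    (U : Set ℂ) (hUo : IsOpen U) (hUc : IsConnected U)
    (a b : ℝ) (hab : a < b) (hIU : ∀ t ∈ Set.Ioo a b, (t : ℂ) ∈ U)
    (z : ℂ → ℂ) (hz : DifferentiableOn ℂ z U) (hinj : Set.InjOn z U) :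
    (∃ V : Set ℂ, ∃ S : ℂ → ℂ, IsOpen V ∧ (∀ t ∈ Set.Ioo a b, z t ∈ V) ∧
        DifferentiableOn ℂ S V ∧ ∀ t ∈ Set.Ioo a b, S (z t) = conj (z t)) ∧
    (∀ (V : Set ℂ) (S₁ S₂ : ℂ → ℂ), IsOpen V → IsConnected V →
        (∀ t ∈ Set.Ioo a b, z t ∈ V) →
        DifferentiableOn ℂ S₁ V → DifferentiableOn ℂ S₂ V →
        (∀ t ∈ Set.Ioo a b, S₁ (z t) = conj (z t) ∧ S₂ (z t) = conj (z t)) →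
        Set.EqOn S₁ S₂ V) := by
  have hzU : AnalyticOnNhd ℂ z U := hz.analyticOnNhd hUo
  set t₀ : ℝ := (a + b) / 2 with ht₀def
  have ht₀ : t₀ ∈ Set.Ioo a b := ⟨by simp only [ht₀def]; linarith, by simp only [ht₀def]; linarith⟩
  set t₁ : ℝ := (a + t₀) / 2 with ht₁def
  have ht₁ : t₁ ∈ Set.Ioo a b := by
    constructor <;> simp only [ht₁def, ht₀def] <;> linarith
  have ht₁t₀ : t₁ ≠ t₀ := by simp only [ht₁def, ht₀def]; intro h; linarith
  have hne2 : ∀ t s : ℝ, t ∈ Set.Ioo a b → s ∈ Set.Ioo a b → t ≠ s → z t ≠ z s := by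
    intro t s h₁ h₂ hne heq
    exact hne (by exact_mod_cast hinj (hIU _ h₁) (hIU _ h₂) heq)
  -- the derivative of `z` has no accumulation of zeros inside `U`
  have hfreq : ∀ u₀ ∈ U, ∀ᶠ u in nhdsWithin u₀ {u₀}ᶜ, deriv z u ≠ 0 := by
    intro u₀ hu₀
    by_contra hcon
    have h0 : ∃ᶠ u in nhdsWithin u₀ {u₀}ᶜ, deriv z u = 0 := by
      simpa [Filter.not_eventually, not_not] using hcon
    have hderiv0 : Set.EqOn (deriv z) 0 U :=
      (hzU.deriv).eqOn_zero_of_preconnected_of_frequently_eq_zero hUc.isPreconnected hu₀ h0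
    -- then `z` is constant near `u₀`, contradicting injectivity
    obtain ⟨r, hr, hball⟩ := Metric.isOpen_iff.1 hUo u₀ hu₀
    have hfd0 : ∀ x ∈ Metric.ball u₀ r, fderivWithin ℂ z (Metric.ball u₀ r) x = 0 := by
      intro x hx
      have hda : DifferentiableAt ℂ z x := (hzU x (hball hx)).differentiableAt
      have hd0 : HasDerivAt z 0 x := by
        have := hda.hasDerivAt
        rwa [hderiv0 (hball hx)] at this
      have hf0 : HasFDerivAt z (0 : ℂ →L[ℂ] ℂ) x := by
        have h := hd0.hasFDerivAt
        have he : ContinuousLinearMap.toSpanSingleton ℂ (0 : ℂ) = 0 := by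
          ext; simp
        rwa [he] at h
      exact hf0.hasFDerivWithinAt.fderivWithin (Metric.isOpen_ball.uniqueDiffWithinAt hx)
    have hmem : u₀ + (r / 2 : ℝ) ∈ Metric.ball u₀ r := by
      simp only [Metric.mem_ball, dist_eq_norm, add_sub_cancel_left]
      rw [Complex.norm_real, Real.norm_eq_abs, abs_of_pos (by linarith)]
      linarith
    have hconst : z (u₀ + (r / 2 : ℝ)) = z u₀ :=
      (convex_ball u₀ r).is_const_of_fderivWithin_eq_zero (hz.mono hball) hfd0 hmem
        (Metric.mem_ball_self hr)
    have heqp := hinj (hball hmem) hu₀ hconst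
    have h0 : ((r / 2 : ℝ) : ℂ) = 0 := by
      have : u₀ + ((r / 2 : ℝ) : ℂ) = u₀ + 0 := by rw [add_zero]; exact heqp
      exact add_left_cancel this
    have : (r / 2 : ℝ) = 0 := by exact_mod_cast h0
    linarith
  -- `z` is an open map on subsets of `U`
  have hopen : ∀ s ⊆ U, IsOpen s → IsOpen (z '' s) := by
    rcases hzU.is_constant_or_isOpen hUc.isPreconnected with ⟨w, hw⟩ | h
    · exact absurd ((hw _ (hIU _ ht₁)).trans (hw _ (hIU _ ht₀)).symm)
        (hne2 t₁ t₀ ht₁ ht₀ ht₁t₀)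
    · exact h
  have hzUopen : IsOpen (z '' U) := hopen U subset_rfl hUo
  -- the inverse function
  set g : ℂ → ℂ := Function.invFunOn z U with hgdef
  have hg1 : ∀ u ∈ U, g (z u) = u := fun u hu => hinj.leftInvOn_invFunOn hu
  have hg2 : ∀ w ∈ z '' U, g w ∈ U ∧ z (g w) = w := by
    rintro w ⟨u, hu, rfl⟩
    rw [hg1 u hu]; exact ⟨hu, rfl⟩
  -- continuity of `g` on `z '' U`
  have hgc : ContinuousOn g (z '' U) := by
    rw [continuousOn_iff]
    rintro w ⟨u, hu, rfl⟩ t hto hgt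
    refine ⟨z '' (t ∩ U), hopen _ Set.inter_subset_right (hto.inter hUo), ?_, ?_⟩
    · exact ⟨u, ⟨by rwa [hg1 u hu] at hgt, hu⟩, rfl⟩
    · rintro w' ⟨⟨v, ⟨hvt, hvU⟩, rfl⟩, -⟩
      rw [Set.mem_preimage, hg1 v hvU]; exact hvt
  -- differentiability of `g` at points where `deriv z ≠ 0`
  have hgd : ∀ u ∈ U, deriv z u ≠ 0 → DifferentiableAt ℂ g (z u) := by
    intro u hu hne
    have hsd : HasStrictDerivAt z (deriv z u) u := by
      have := (hzU u hu).hasStrictFDerivAt.hasStrictDerivAt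
      simpa using this
    have hev : ∀ᶠ x in nhds u, g (z x) = x :=
      Filter.eventually_of_mem (hUo.mem_nhds hu) hg1
    exact (HasStrictDerivAt.hasDerivAt (hsd.to_local_left_inverse hne hev)).differentiableAt
  -- differentiability of `g` on all of `z '' U` (removable singularities)
  have hgD : DifferentiableOn ℂ g (z '' U) := by
    rintro w₀ hw₀
    obtain ⟨u₀, hu₀, rfl⟩ := hw₀
    obtain ⟨O₀, hO₀mem, hO₀⟩ := Filter.eventually_iff_exists_mem.1 (hfreq u₀ hu₀)
    rw [mem_nhdsWithin] at hO₀mem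
    obtain ⟨O₁, hO₁open, hu₀O₁, hO₁sub⟩ := hO₀mem
    set O : Set ℂ := O₁ ∩ U with hOdef
    have hOopen : IsOpen O := hO₁open.inter hUo
    have hu₀O : u₀ ∈ O := ⟨hu₀O₁, hu₀⟩
    have hOne : ∀ x ∈ O, x ≠ u₀ → deriv z x ≠ 0 := fun x hx hxne =>
      hO₀ x (hO₁sub ⟨hx.1, hxne⟩)
    set B : Set ℂ := z '' O with hBdef
    have hBopen : IsOpen B := hopen O Set.inter_subset_right hOopen
    have hBsub : B ⊆ z '' U := Set.image_mono Set.inter_subset_right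
    have hw₀B : z u₀ ∈ B := ⟨u₀, hu₀O, rfl⟩
    have hdiff : DifferentiableOn ℂ g (B \ {z u₀}) := by
      rintro w ⟨⟨v, hvO, rfl⟩, hwne⟩
      have hvne : v ≠ u₀ := fun h => by simp [h] at hwne
      exact (hgd v hvO.2 (hOne v hvO hvne)).differentiableWithinAt
    have hcont : ContinuousAt g (z u₀) :=
      (hgc.mono hBsub).continuousAt (hBopen.mem_nhds hw₀B)
    have hgB : DifferentiableOn ℂ g B :=
      (Complex.differentiableOn_compl_singleton_and_continuousAt_iff
        (hBopen.mem_nhds hw₀B)).1 ⟨hdiff, hcont⟩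
    exact (hgB.differentiableAt (hBopen.mem_nhds hw₀B)).differentiableWithinAt
  -- the reflected function ζ(u) = conj (z (conj u))
  have hζ : ∀ u : ℂ, (conj u : ℂ) ∈ U → DifferentiableAt ℂ (fun w => conj (z (conj w))) u := by
    intro u hu
    have hda : HasDerivAt z (deriv z (conj u)) (conj u) := (hzU _ hu).differentiableAt.hasDerivAt
    have := conj_comp_conj_hasDerivAt hda
    rw [Complex.conj_conj] at this
    exact this.differentiableAt
  -- the domain of the Schwarz function
  set W : Set ℂ := U ∩ (fun w : ℂ => (conj w : ℂ)) ⁻¹' U with hWdef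
  have hWopen : IsOpen W := hUo.inter (hUo.preimage Complex.continuous_conj)
  have hWsub : W ⊆ U := Set.inter_subset_left
  have htW : ∀ t ∈ Set.Ioo a b, (t : ℂ) ∈ W := by
    intro t ht
    refine ⟨hIU t ht, ?_⟩
    simp only [Set.mem_preimage, Complex.conj_ofReal]
    exact hIU t ht
  set V : Set ℂ := z '' W with hVdef
  have hVopen : IsOpen V := hopen W hWsub hWopen
  have hVsub : V ⊆ z '' U := Set.image_mono hWsub
  set S : ℂ → ℂ := fun w => conj (z (conj (g w))) with hSdef
  constructor
  · refine ⟨V, S, hVopen, ?_, ?_, ?_⟩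
    · exact fun t ht => ⟨t, htW t ht, rfl⟩
    · rintro w hw
      obtain ⟨u, huW, rfl⟩ := hw
      have hgu : g (z u) = u := hg1 u (hWsub huW)
      have hgdiff : DifferentiableAt ℂ g (z u) :=
        hgD.differentiableAt (hzUopen.mem_nhds (hVsub ⟨u, huW, rfl⟩))
      have hζdiff : DifferentiableAt ℂ (fun w => conj (z (conj w))) (g (z u)) := by
        rw [hgu]; exact hζ u huW.2
      exact (hζdiff.comp _ hgdiff).differentiableWithinAt
    · intro t ht
      have hgt : g (z t) = t := hg1 _ (hIU t ht)
      simp only [hSdef, hgt, Complex.conj_ofReal]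
  · intro V' S₁ S₂ hV'o hV'c hV'mem hS₁ hS₂ hval
    have hS₁a : AnalyticOnNhd ℂ S₁ V' := hS₁.analyticOnNhd hV'o
    have hS₂a : AnalyticOnNhd ℂ S₂ V' := hS₂.analyticOnNhd hV'o
    have htend : Filter.Tendsto (fun s : ℝ => z s) (nhdsWithin t₀ {t₀}ᶜ)
        (nhdsWithin (z t₀) {z (t₀ : ℝ)}ᶜ) := by
      rw [tendsto_nhdsWithin_iff]
      constructor
      · have hc : ContinuousAt z (t₀ : ℂ) := (hzU _ (hIU _ ht₀)).continuousAt
        exact (hc.comp Complex.continuous_ofReal.continuousAt).mono_left nhdsWithin_le_nhds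
      · have h1 : ∀ᶠ s : ℝ in nhdsWithin t₀ {t₀}ᶜ, s ∈ Set.Ioo a b :=
          Filter.eventually_iff_exists_mem.2 ⟨{t₀}ᶜ ∩ Set.Ioo a b,
            inter_mem_nhdsWithin _ (isOpen_Ioo.mem_nhds ht₀), fun s hs => hs.2⟩
        have h2 : ∀ᶠ s : ℝ in nhdsWithin t₀ {t₀}ᶜ, s ≠ t₀ := self_mem_nhdsWithin
        filter_upwards [h1, h2] with s hs hsne
        exact hne2 s t₀ hs ht₀ hsne
    have hfr : ∃ᶠ w in nhdsWithin (z t₀) {z (t₀ : ℝ)}ᶜ, S₁ w = S₂ w := by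
      apply htend.frequently
      have h1 : ∀ᶠ s : ℝ in nhdsWithin t₀ {t₀}ᶜ, S₁ (z s) = S₂ (z s) := by
        have hIoo : ∀ᶠ s : ℝ in nhdsWithin t₀ {t₀}ᶜ, s ∈ Set.Ioo a b :=
          Filter.eventually_iff_exists_mem.2 ⟨{t₀}ᶜ ∩ Set.Ioo a b,
            inter_mem_nhdsWithin _ (isOpen_Ioo.mem_nhds ht₀), fun s hs => hs.2⟩
        filter_upwards [hIoo] with s hs
        rw [(hval s hs).1, (hval s hs).2]
      exact h1.frequently
    exact hS₁a.eqOn_of_preconnected_of_frequently_eq hS₂a hV'c.isPreconnected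
      (hV'mem t₀ ht₀) hfr
end

section
/- Let κ₁ and κ₂ be finite complex linear combinations of the functions z ↦ z^m/(1 - z·conj(a))^(m+2), where a ranges over points of the open unit disc and m over nonnegative integers (these span the Bergman span of the unit disc, since the Bergman kernel of the disc is K(z,w) = 1/(π(1 - z·conj w)²) and these functions are its derivatives in conj w). If κ₁(z)·(i z) = -conj(κ₂(z)·(i z)) for every z with |z| = 1, then κ₁ and κ₂ are identically zero on the open unit disc, and moreover every coefficient in the given linear combinations is zero. (The unit tangent vector to the unit circle at z is T(z) = iz; this is the genus-zero uniqueness statement for elements of the Bergman span on the unit disc.) -/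
open ComplexConjugate

section AuxBergman
open Topology Filter


lemma aux_ind (P : Finset ℂ) (g : ℂ → ℂ) (d : ℂ × ℕ →₀ ℂ)
    (hg : ∀ p ∈ d.support, ContinuousAt g p.1)
    (heq : ∀ z : ℂ, z ∉ P → (d.sum fun p coef => coef / (z - p.1) ^ (p.2 + 2)) = g z) :
    d = 0 := by
  by_contra hd
  obtain ⟨p, hp⟩ := Finsupp.support_nonempty_iff.2 hd
  classical
  set M := (d.support.filter (fun q => q.1 = p.1)).image Prod.snd with hM
  have hMne : M.Nonempty := ⟨p.2, Finset.mem_image.2 ⟨p, Finset.mem_filter.2 ⟨hp, rfl⟩, rfl⟩⟩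
  set a₀ := p.1 with ha₀
  set m₀ := M.max' hMne with hm₀
  have hp₀ : (a₀, m₀) ∈ d.support := by
    obtain ⟨q, hq, hq2⟩ := Finset.mem_image.1 (M.max'_mem hMne)
    obtain ⟨hq3, hq4⟩ := Finset.mem_filter.1 hq
    have : q = (a₀, m₀) := Prod.ext_iff.2 ⟨hq4, hq2⟩
    rwa [← this]
  -- the filter
  set S : Set ℂ := (↑(P ∪ {a₀}) : Set ℂ)ᶜ with hS
  have hLne : (𝓝[S] a₀).NeBot := by
    rw [← mem_closure_iff_nhdsWithin_neBot]
    exact ((P ∪ {a₀}).finite_toSet.countable.dense_compl ℝ) a₀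
  have hSne : ∀ z ∈ S, z ≠ a₀ ∧ z ∉ P := by
    intro z hz
    simp only [hS, Set.mem_compl_iff, Finset.coe_union, Set.mem_union, Finset.coe_singleton,
      Set.mem_singleton_iff, not_or, Finset.mem_coe] at hz
    exact ⟨hz.2, hz.1⟩
  -- limit 1 : via g
  have T1 : Tendsto (fun z => (z - a₀) ^ (m₀ + 2) *
      (d.sum fun p coef => coef / (z - p.1) ^ (p.2 + 2))) (𝓝[S] a₀) (𝓝 0) := by
    have : Tendsto (fun z => (z - a₀) ^ (m₀ + 2) * g z) (𝓝[S] a₀) (𝓝 0) := by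
      have h1 : Tendsto (fun z : ℂ => (z - a₀) ^ (m₀ + 2)) (𝓝 a₀) (𝓝 0) := by
        have hc : ContinuousAt (fun z : ℂ => (z - a₀) ^ (m₀ + 2)) a₀ :=
          ((continuous_id.sub continuous_const).pow _).continuousAt
        simpa using hc.tendsto
      have := h1.mul (hg (a₀, m₀) hp₀)
      rw [zero_mul] at this
      exact this.mono_left nhdsWithin_le_nhds
    refine this.congr' ?_
    filter_upwards [eventually_mem_nhdsWithin] with z hz
    rw [heq z (hSne z hz).2]
  -- limit 2 : termwise
  have T2 : Tendsto (fun z => (z - a₀) ^ (m₀ + 2) *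
      (d.sum fun p coef => coef / (z - p.1) ^ (p.2 + 2))) (𝓝[S] a₀) (𝓝 (d (a₀, m₀))) := by
    have hrw : ∀ z : ℂ, (z - a₀) ^ (m₀ + 2) *
        (d.sum fun p coef => coef / (z - p.1) ^ (p.2 + 2))
        = ∑ q ∈ d.support, d q * ((z - a₀) ^ (m₀ + 2) / (z - q.1) ^ (q.2 + 2)) := by
      intro z
      rw [Finsupp.sum, Finset.mul_sum]
      exact Finset.sum_congr rfl fun q _ => by ring
    simp only [hrw]
    have hsum : ∑ q ∈ d.support, (if q = (a₀, m₀) then d (a₀, m₀) else 0) = d (a₀, m₀) := by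
      rw [Finset.sum_ite_eq' d.support (a₀, m₀) (fun _ => d (a₀, m₀))]
      simp [hp₀]
    rw [← hsum]
    apply tendsto_finset_sum
    intro q hq
    by_cases hqe : q = (a₀, m₀)
    · subst hqe
      rw [if_pos rfl]
      -- function equals constant d (a₀,m₀) on S
      have : Tendsto (fun _ : ℂ => d (a₀, m₀)) (𝓝[S] a₀) (𝓝 (d (a₀, m₀))) := tendsto_const_nhds
      refine this.congr' ?_
      filter_upwards [eventually_mem_nhdsWithin] with z hz
      have hz0 : z - a₀ ≠ 0 := sub_ne_zero.2 (hSne z hz).1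
      rw [div_self (pow_ne_zero _ hz0), mul_one]
    · rw [if_neg hqe]
      by_cases hq1 : q.1 = a₀
      · -- same point, lower order
        have hql : q.2 < m₀ := by
          have hmem : q.2 ∈ M := Finset.mem_image.2 ⟨q, Finset.mem_filter.2 ⟨hq, hq1⟩, rfl⟩
          have hle := M.le_max' q.2 hmem
          rcases lt_or_eq_of_le hle with h | h
          · exact h
          · exact absurd (show q = (a₀, m₀) from Prod.ext_iff.2 ⟨hq1, h⟩) hqe
        have : Tendsto (fun z : ℂ => d q * (z - a₀) ^ (m₀ - q.2)) (𝓝[S] a₀) (𝓝 0) := by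
          have hc : ContinuousAt (fun z : ℂ => d q * (z - a₀) ^ (m₀ - q.2)) a₀ :=
            continuousAt_const.mul (((continuous_id.sub continuous_const).pow _).continuousAt)
          have : (fun z : ℂ => d q * (z - a₀) ^ (m₀ - q.2)) a₀ = 0 := by
            simp [Nat.sub_ne_zero_of_lt hql]
          rw [← this]
          exact hc.continuousWithinAt.tendsto
        refine this.congr' ?_
        filter_upwards [eventually_mem_nhdsWithin] with z hz
        have hz0 : z - a₀ ≠ 0 := sub_ne_zero.2 (hSne z hz).1
        have hdiv : (z - a₀) ^ (m₀ + 2) / (z - a₀) ^ (q.2 + 2) = (z - a₀) ^ (m₀ - q.2) := by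
          rw [eq_comm, eq_div_iff (pow_ne_zero _ hz0), ← pow_add]
          congr 1
          omega
        rw [hq1, hdiv]
      · -- different point : continuous, value 0
        have hc : ContinuousAt (fun z : ℂ => d q * ((z - a₀) ^ (m₀ + 2) / (z - q.1) ^ (q.2 + 2))) a₀ := by
          apply continuousAt_const.mul
          apply ContinuousAt.div
          · exact ((continuous_id.sub continuous_const).pow _).continuousAt
          · exact ((continuous_id.sub continuous_const).pow _).continuousAt
          · exact pow_ne_zero _ (sub_ne_zero.2 fun h => hq1 (by rw [← h]) )
        have hval : (fun z : ℂ => d q * ((z - a₀) ^ (m₀ + 2) / (z - q.1) ^ (q.2 + 2))) a₀ = 0 := by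
          simp
        rw [← hval]
        exact hc.continuousWithinAt.tendsto
  exact (Finsupp.mem_support_iff.1 hp₀) (tendsto_nhds_unique T2 T1)

lemma aux_key (z a coef : ℂ) (m : ℕ) (ha : ‖a‖ < 1) (hz : ‖z‖ = 1) :
    -conj (coef * (z ^ m / (1 - z * conj a) ^ (m + 2)) * (Complex.I * z))
      = conj coef / (z - a) ^ (m + 2) * (Complex.I * z) := by
  have hz0 : z ≠ 0 := by
    intro h; rw [h] at hz; simp at hz
  have hzc : conj z = z⁻¹ := by
    have h1 : z * conj z = 1 := by
      rw [Complex.mul_conj]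
      norm_cast
      rw [Complex.normSq_eq_norm_sq, hz]; norm_num
    rw [eq_inv_of_mul_eq_one_left (by linear_combination h1 : conj z * z = 1)]
  have haz : z - a ≠ 0 := sub_ne_zero.2 (by rintro rfl; rw [hz] at ha; exact lt_irrefl _ ha)
  simp only [map_mul, map_div₀, map_pow, map_sub, map_one, Complex.conj_conj, Complex.conj_I, hzc]
  rw [show 1 - z⁻¹ * a = (z - a) * z⁻¹ by field_simp, mul_pow]
  field_simp
  have hzz : z ^ 2 * z⁻¹ ^ 2 = 1 := by rw [← mul_pow, mul_inv_cancel₀ hz0, one_pow]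
  linear_combination (-(conj coef) * z⁻¹ ^ m) * hzz

lemma aux_main (c₁ c₂ : ℂ × ℕ →₀ ℂ)
    (hs₁ : ∀ p ∈ c₁.support, ‖p.1‖ < 1)
    (hs₂ : ∀ p ∈ c₂.support, ‖p.1‖ < 1)
    (h : ∀ z : ℂ, ‖z‖ = 1 →
      (c₁.sum fun p coef => coef * (z ^ p.2 / (1 - z * conj p.1) ^ (p.2 + 2)))
          * (Complex.I * z)
        = -conj ((c₂.sum fun p coef => coef * (z ^ p.2 / (1 - z * conj p.1) ^ (p.2 + 2)))
          * (Complex.I * z))) :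
    c₂ = 0 := by
  classical
  set A : ℂ → ℂ :=
    fun z => ∑ p ∈ c₁.support, c₁ p * (z ^ p.2 / (1 - z * conj p.1) ^ (p.2 + 2)) with hA
  set R : ℂ → ℂ := fun z => ∑ p ∈ c₂.support, conj (c₂ p) / (z - p.1) ^ (p.2 + 2) with hR
  set P : Finset ℂ :=
    c₁.support.image (fun p => (conj p.1)⁻¹) ∪ c₂.support.image Prod.fst with hP
  -- points of the unit circle are not in P
  have hcircP : ∀ z : ℂ, ‖z‖ = 1 → z ∉ (P : Set ℂ) := by
    intro z hz hmem
    rw [hP] at hmem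
    simp only [Finset.coe_union, Set.mem_union, Finset.coe_image, Set.mem_image,
      Finset.mem_coe] at hmem
    rcases hmem with ⟨p, hp, hpe⟩ | ⟨p, hp, hpe⟩
    · have h1 : ‖p.1‖ < 1 := hs₁ p hp
      have habs : ‖(conj p.1)⁻¹‖ = (‖p.1‖)⁻¹ := by
        rw [norm_inv, Complex.norm_conj]
      rw [hpe, hz] at habs
      have : ‖p.1‖ = 1 := inv_eq_one.1 habs.symm
      linarith
    · have h1 := hs₂ p hp
      rw [hpe, hz] at h1
      exact lt_irrefl _ h1
  -- the circle identity : A = R on the unit circle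
  have hcirc : ∀ z : ℂ, ‖z‖ = 1 → A z = R z := by
    intro z hz
    have hz0 : z ≠ 0 := by intro h0; rw [h0] at hz; simp at hz
    have hIz : Complex.I * z ≠ 0 := mul_ne_zero Complex.I_ne_zero hz0
    apply mul_right_cancel₀ hIz
    have hh := h z hz
    rw [Finsupp.sum, Finsupp.sum] at hh
    rw [hA]
    rw [hh, hR, Finset.sum_mul, Finset.sum_mul, map_sum, neg_eq_iff_eq_neg, ← Finset.sum_neg_distrib]
    refine Finset.sum_congr rfl fun q hq => ?_
    rw [← aux_key z q.1 (c₂ q) q.2 (hs₂ q hq) hz, neg_neg]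
  -- analyticity of A - R away from P
  have hAn : AnalyticOnNhd ℂ (fun z => A z - R z) ((P : Set ℂ))ᶜ := by
    intro z hzc
    apply AnalyticAt.sub
    · apply Finset.analyticAt_fun_sum
      intro p hp
      apply analyticAt_const.mul
      apply AnalyticAt.div
      · exact analyticAt_id.pow _
      · exact (analyticAt_const.sub (analyticAt_id.mul analyticAt_const)).pow _
      · apply pow_ne_zero
        intro h0
        apply hzc
        have hc0 : conj p.1 ≠ 0 := by
          intro hc
          rw [hc, mul_zero, sub_zero] at h0
          exact one_ne_zero h0
        have : z = (conj p.1)⁻¹ := by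
          field_simp
          linear_combination -h0
        rw [hP]
        simp only [Finset.coe_union, Set.mem_union, Finset.coe_image, Set.mem_image,
          Finset.mem_coe]
        exact Or.inl ⟨p, hp, this.symm⟩
    · apply Finset.analyticAt_fun_sum
      intro p hp
      apply analyticAt_const.div
      · exact (analyticAt_id.sub analyticAt_const).pow _
      · apply pow_ne_zero
        intro h0
        apply hzc
        have : z = p.1 := by linear_combination h0
        rw [hP]
        simp only [Finset.coe_union, Set.mem_union, Finset.coe_image, Set.mem_image,
          Finset.mem_coe]
        exact Or.inr ⟨p, hp, this.symm⟩
  -- frequently zero near 1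
  have hfreq : ∃ᶠ z in 𝓝[≠] (1 : ℂ), A z - R z = 0 := by
    set u : ℕ → ℂ := fun n => Complex.exp (Complex.I * (1 / (n + 1) : ℝ)) with hu
    have habs : ∀ n, ‖u n‖ = 1 := by
      intro n
      rw [hu]
      simp [Complex.norm_exp]
    have hne1 : ∀ n, u n ≠ 1 := by
      intro n h1
      rw [hu] at h1
      rw [Complex.exp_eq_one_iff] at h1
      obtain ⟨k, hk⟩ := h1
      have hIne : (Complex.I : ℂ) ≠ 0 := Complex.I_ne_zero
      have : ((1 / (n + 1) : ℝ) : ℂ) = ((2 * Real.pi * k : ℝ) : ℂ) := by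
        have := hk
        push_cast at this ⊢
        field_simp at this ⊢
        exact this
      rw [Complex.ofReal_inj] at this
      have hpi := Real.pi_gt_three
      have hn : (0:ℝ) < 1 / (n + 1) := by positivity
      have hn2 : (1:ℝ) / (n + 1) ≤ 1 := by
        rw [div_le_one (by positivity)]
        linarith [Nat.cast_nonneg (α := ℝ) n]
      rcases le_or_gt (k : ℝ) 0 with hk0 | hk0
      · nlinarith
      · have : (1:ℝ) ≤ k := by exact_mod_cast hk0
        nlinarith
    have htend : Tendsto u atTop (𝓝[≠] (1 : ℂ)) := by
      rw [tendsto_nhdsWithin_iff]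
      constructor
      · have h0 : Tendsto (fun n : ℕ => ((1 / (n + 1) : ℝ) : ℂ)) atTop (𝓝 0) := by
          have h0' := (Complex.continuous_ofReal.tendsto 0).comp
            tendsto_one_div_add_atTop_nhds_zero_nat
          rw [show ((0:ℂ)) = ((0:ℝ):ℂ) by norm_num]
          exact h0'
        have h1 : Tendsto (fun n : ℕ => Complex.I * ((1 / (n + 1) : ℝ) : ℂ)) atTop (𝓝 0) := by
          simpa using h0.const_mul Complex.I
        have := (Complex.continuous_exp.tendsto 0).comp h1
        simpa [hu, Function.comp_def] using this
      · exact Eventually.of_forall fun n => hne1 n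
    have hfz : ∀ n, A (u n) - R (u n) = 0 := fun n => sub_eq_zero.2 (hcirc (u n) (habs n))
    exact htend.frequently (Frequently.of_forall hfz)
  -- identity theorem
  have hzero : Set.EqOn (fun z => A z - R z) 0 ((P : Set ℂ))ᶜ := by
    apply hAn.eqOn_zero_of_preconnected_of_frequently_eq_zero
    · exact (P.finite_toSet.countable.isPathConnected_compl_of_one_lt_rank
        (by rw [Complex.rank_real_complex]; norm_num)).isConnected.isPreconnected
    · exact hcircP 1 (by simp)
    · exact hfreq
  -- apply the independence lemma
  set d : ℂ × ℕ →₀ ℂ := c₂.mapRange (starRingEnd ℂ) (map_zero _) with hd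
  have hind : d = 0 := by
    apply aux_ind P A d
    · intro p hp
      have hp2 : p ∈ c₂.support := Finsupp.support_mapRange hp
      have ha : ‖p.1‖ < 1 := hs₂ p hp2
      rw [hA]
      apply tendsto_finset_sum
      intro q hq
      have hden : (1 - p.1 * conj q.1) ≠ 0 := by
        intro h0
        have h1 : p.1 * conj q.1 = 1 := by linear_combination -h0
        have h2 : ‖p.1 * conj q.1‖ = 1 := by rw [h1]; simp
        rw [norm_mul, Complex.norm_conj] at h2
        have h3 := hs₁ q hq
        have h4 := norm_nonneg p.1
        have h5 := norm_nonneg q.1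
        nlinarith
      exact (continuousAt_const.mul (((continuous_pow q.2).continuousAt).div
        (((continuous_const.sub (continuous_id.mul continuous_const)).pow _).continuousAt)
        (pow_ne_zero _ hden)))
    · intro z hzP
      have hdz : (d.sum fun p coef => coef / (z - p.1) ^ (p.2 + 2)) = R z := by
        rw [hd, Finsupp.sum_mapRange_index (fun p => by simp)]
        rfl
      rw [hdz]
      have := hzero (by exact hzP)
      simp only [Pi.zero_apply] at this
      linear_combination -this
  -- conclude
  ext p
  have := DFunLike.congr_fun hind p
  rw [hd, Finsupp.mapRange_apply] at this
  simpa using this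

end AuxBergman

/-- Linear independence / uniqueness for elements of the Bergman span of the unit disc:
if `κ₁` and `κ₂` are finite linear combinations, with coefficients `c₁ p` and `c₂ p` for
`p = (a, m)` with `a` in the open unit disc, of the Bergman span generators
`z ↦ z^m / (1 - z * conj a)^(m+2)`, and `κ₁(z)·(iz) = -conj (κ₂(z)·(iz))` on the unit
circle (with `T(z) = iz` the unit tangent), then `κ₁` and `κ₂` vanish identically on the
open unit disc and all the coefficients are zero. -/
theorem bergman_span_tangential_uniqueness
    (c₁ c₂ : ℂ × ℕ →₀ ℂ)
    (hs₁ : ∀ p ∈ c₁.support, ‖p.1‖ < 1)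
    (hs₂ : ∀ p ∈ c₂.support, ‖p.1‖ < 1)
    (h : ∀ z : ℂ, ‖z‖ = 1 →
      (c₁.sum fun p coef => coef * (z ^ p.2 / (1 - z * conj p.1) ^ (p.2 + 2)))
          * (Complex.I * z)
        = -conj ((c₂.sum fun p coef => coef * (z ^ p.2 / (1 - z * conj p.1) ^ (p.2 + 2)))
          * (Complex.I * z))) :
    (∀ z : ℂ, ‖z‖ < 1 →
      (c₁.sum fun p coef => coef * (z ^ p.2 / (1 - z * conj p.1) ^ (p.2 + 2))) = 0 ∧
      (c₂.sum fun p coef => coef * (z ^ p.2 / (1 - z * conj p.1) ^ (p.2 + 2))) = 0) ∧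
    c₁ = 0 ∧ c₂ = 0 := by
  have hc₂ : c₂ = 0 := aux_main c₁ c₂ hs₁ hs₂ h
  have h' : ∀ z : ℂ, ‖z‖ = 1 →
      (c₂.sum fun p coef => coef * (z ^ p.2 / (1 - z * conj p.1) ^ (p.2 + 2)))
          * (Complex.I * z)
        = -conj ((c₁.sum fun p coef => coef * (z ^ p.2 / (1 - z * conj p.1) ^ (p.2 + 2)))
          * (Complex.I * z)) := by
    intro z hz
    have h2 := congrArg (starRingEnd ℂ) (h z hz)
    rw [map_neg, Complex.conj_conj] at h2
    linear_combination h2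
  have hc₁ : c₁ = 0 := aux_main c₂ c₁ hs₂ hs₁ h'
  refine ⟨fun z hz => ?_, hc₁, hc₂⟩
  rw [hc₁, hc₂]
  simp
end
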